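/- arXiv:1211.3049 — 6 statements merged into one kernel-verified Lean document; each statement's English description precedes it below -/
import Mathlib

section
/- If u is a central word of the form u = p01q = q10p with p and q palindromes, then p and q are themselves central words, and the pair (p,q) is uniquely determined by u. -/
/-- A finite binary word is balanced if the numbers of occurrences of `true`
in any two factors of equal length differ by at most 1. -/
def BalancedWord (w : List Bool) : Prop :=
  ∀ u v : List Bool, u <:+: w → v <:+: w → u.length = v.length →
    u.count true ≤ v.count true + 1

/-- A word `u` is central if it is a palindrome and both `0u1` and `1u0` are balanced. -/
def Central (u : List Bool) : Prop :=
  u.reverse = u ∧ BalancedWord (false :: (u ++ [true])) ∧ BalancedWord (true :: (u ++ [false]))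

/-- Balancedness is inherited by factors. -/
lemma balanced_infix {w v : List Bool} (hw : BalancedWord w) (hv : v <:+: w) :
    BalancedWord v :=
  fun a b ha hb hl => hw a b (ha.trans hv) (hb.trans hv) hl

/-- `f` has period `t` on the domain `[0, n)`. -/
def HP (f : ℕ → Bool) (n t : ℕ) : Prop := ∀ i, i + t < n → f i = f (i + t)

lemma HP.mono {f n t} (h : HP f n t) {m : ℕ} (hm : m ≤ n) : HP f m t :=
  fun i hi => h i (lt_of_lt_of_le hi hm)

lemma hp_reach {f n g} (h : HP f n g) : ∀ k i, i + k * g < n → f i = f (i + k * g) := by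
  intro k
  induction k with
  | zero => simp
  | succ k ih =>
    intro i hi
    have he : i + (k+1) * g = (i + g) + k * g := by ring
    rw [he] at hi ⊢
    exact (h i (by omega)).trans (ih (i+g) hi)

lemma hp_congr {f n g} (h : HP f n g) {i j : ℕ} (hij : i ≤ j)
    (hd : g ∣ j - i) (hj : j < n) : f i = f j := by
  obtain ⟨k, hk⟩ := hd
  have he : j = i + k * g := by rw [Nat.mul_comm]; omega
  rw [he] at hj ⊢
  exact hp_reach h k i hj

/-- The Fine–Wilf theorem for finite words. -/
lemma fine_wilf : ∀ m : ℕ, ∀ (f : ℕ → Bool) (p q n : ℕ), p + q = m → 0 < p → 0 < q →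
    p + q ≤ n + Nat.gcd p q → HP f n p → HP f n q → HP f n (Nat.gcd p q) := by
  intro m
  induction m using Nat.strong_induction_on with
  | _ m ih =>
    have key : ∀ (f : ℕ → Bool) (p q n : ℕ), q < p → p + q = m → 0 < q →
        p + q ≤ n + Nat.gcd p q → HP f n p → HP f n q → HP f n (Nat.gcd p q) := by
      intro f p q n hqp hm hq hn hfp hfq
      set g := Nat.gcd p q with hgdef
      have hgp : g ∣ p := Nat.gcd_dvd_left p q
      have hgq : g ∣ q := Nat.gcd_dvd_right p q
      have hg : 0 < g := Nat.gcd_pos_of_pos_right p hq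
      have hgle : g ≤ q := Nat.le_of_dvd hq hgq
      have hpq : q + g ≤ p := by
        have h1 : g ∣ p - q := Nat.dvd_sub hgp hgq
        have := Nat.le_of_dvd (by omega) h1
        omega
      have hgsub : Nat.gcd (p - q) q = g := Nat.gcd_sub_self_left (le_of_lt hqp)
      have hpre_p : HP f (n - q) (p - q) := by
        intro i hi
        have h1 : i + p < n := by omega
        have e : i + (p - q) + q = i + p := by omega
        calc f i = f (i + p) := hfp i h1
        _ = f (i + (p - q)) := by
            rw [← e]; exact (hfq (i + (p-q)) (by omega)).symm
      have hpre_q : HP f (n - q) q := hfq.mono (by omega)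
      set f' : ℕ → Bool := fun i => f (i + q) with hf'
      have hsh_p : HP f' (n - q) (p - q) := by
        intro i hi
        have h1 : f i = f (i + q) := hfq i (by omega)
        have h2 : f i = f (i + p) := hfp i (by omega)
        have e : i + (p - q) + q = i + p := by omega
        simp only [hf']
        rw [e, ← h1, ← h2]
      have hsh_q : HP f' (n - q) q := by
        intro i hi
        simp only [hf']
        exact hfq (i + q) (by omega)
      have hcond : (p - q) + q ≤ (n - q) + Nat.gcd (p - q) q := by
        rw [hgsub]; omega
      have hm' : (p - q) + q < m := by omega
      have HPre : HP f (n - q) g := by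
        rw [← hgsub]
        exact ih _ hm' f (p - q) q (n - q) rfl (by omega) hq hcond hpre_p hpre_q
      have HSh : HP f' (n - q) g := by
        rw [← hgsub]
        exact ih _ hm' f' (p - q) q (n - q) rfl (by omega) hq hcond hsh_p hsh_q
      intro i hi
      by_cases hA : i + g < n - q
      · exact HPre i hA
      · by_cases hB : q ≤ i
        · have := HSh (i - q) (by omega)
          simp only [hf'] at this
          have e1 : i - q + q = i := by omega
          have e2 : i - q + g + q = i + g := by omega
          rwa [e1, e2] at this
        · push_neg at hB
          have hn2q : 2 * q ≤ n := by omega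
          have step1 : f i = f (i + q) := hfq i (by omega)
          have step2 : f (i + g) = f (i + q) := by
            have := hp_congr HSh (i := i + g - q) (j := i) (by omega)
              (by
                have hd : g ∣ q - g := Nat.dvd_sub hgq (dvd_refl g)
                have e : i - (i + g - q) = q - g := by omega
                rw [e]; exact hd)
              (by omega)
            simp only [hf'] at this
            have e1 : i + g - q + q = i + g := by omega
            rwa [e1] at this
          rw [step1, step2]
    intro f p q n hm hp hq hn hfp hfq
    rcases lt_trichotomy q p with h | h | h
    · exact key f p q n h hm hq hn hfp hfq
    · subst h
      rw [Nat.gcd_self]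
      exact hfq
    · rw [Nat.gcd_comm]
      exact key f q p n h (by omega) hp (by rw [Nat.gcd_comm]; omega) hfq hfp

/-- A border of `u` of length `k` gives period `|u| - k`. -/
lemma border_period (u v : List Bool) (h1 : v <+: u) (h2 : v <:+ u) :
    HP (fun i => u.getD i false) u.length (u.length - v.length) := by
  obtain ⟨s, hs⟩ := h1
  obtain ⟨t, ht⟩ := h2
  intro i hi
  have hvlen : v.length ≤ u.length := List.IsSuffix.length_le ⟨t, ht⟩
  have htlen : t.length = u.length - v.length := by
    have := congrArg List.length ht
    simp at this; omega
  have hiv : i < v.length := by omega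
  have L1 : u.getD i false = v.getD i false := by
    rw [← hs, List.getD_append _ _ _ _ hiv]
  have hidx : i + (u.length - v.length) = t.length + i := by omega
  have L2 : u.getD (i + (u.length - v.length)) false = v.getD i false := by
    rw [hidx, ← ht, List.getD_append_right _ _ _ _ (by omega)]
    congr 1
    omega
  simp only []
  rw [L1, L2]

lemma letter_at (a : List Bool) (x : Bool) (c : List Bool) :
    (a ++ (x :: c)).getD a.length false = x := by
  rw [List.getD_append_right _ _ _ _ (le_refl _)]
  simp

/-- Uniqueness core: two factorizations with strictly increasing `p`-part are impossible. -/
lemma unique_aux (u p q p' q' : List Bool)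
    (h1 : u = p ++ [false, true] ++ q) (h2 : u = q ++ [true, false] ++ p)
    (h1' : u = p' ++ [false, true] ++ q') (h2' : u = q' ++ [true, false] ++ p')
    (hlt : p.length < p'.length) : False := by
  set n := u.length with hn
  set F : ℕ → Bool := fun i => u.getD i false with hF
  have hlen : n = p.length + q.length + 2 := by
    rw [hn, h1]; simp; omega
  have hlen' : n = p'.length + q'.length + 2 := by
    rw [hn, h1']; simp; omega
  -- q is a border of u, giving period n - |q| = |p| + 2
  have hqpre : q <+: u := ⟨[true, false] ++ p, by rw [h2]; simp⟩
  have hqsuf : q <:+ u := ⟨p ++ [false, true], by rw [h1]⟩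
  have perA : HP F n (n - q.length) := border_period u q hqpre hqsuf
  -- p' is a border of u, giving period n - |p'| = |q'| + 2
  have hp'pre : p' <+: u := ⟨[false, true] ++ q', by rw [h1']; simp⟩
  have hp'suf : p' <:+ u := ⟨q' ++ [true, false], by rw [h2']⟩
  have perB : HP F n (n - p'.length) := border_period u p' hp'pre hp'suf
  set A := n - q.length with hA
  set B := n - p'.length with hB
  have hAe : A = p.length + 2 := by omega
  have hBe : B = q'.length + 2 := by omega
  have hApos : 0 < A := by omega
  have hBpos : 0 < B := by omega
  have hsum : A + B ≤ n + 1 := by omega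
  have hgpos : 0 < Nat.gcd A B := Nat.gcd_pos_of_pos_left B hApos
  have hfw : HP F n (Nat.gcd A B) :=
    fine_wilf (A + B) F A B n rfl hApos hBpos (by omega) perA perB
  have gA : Nat.gcd A B ∣ A := Nat.gcd_dvd_left A B
  have gB : Nat.gcd A B ∣ B := Nat.gcd_dvd_right A B
  -- letters
  have Fp : F p.length = false := by
    have e : u = p ++ (false :: (true :: q)) := by rw [h1]; simp
    rw [hF]
    simp only []
    rw [e]
    exact letter_at p false (true :: q)
  have Fq' : F q'.length = true := by
    have e : u = q' ++ (true :: (false :: p')) := by rw [h2']; simp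
    rw [hF]
    simp only []
    rw [e]
    exact letter_at q' true (false :: p')
  have hi1 : p.length < n := by omega
  have hi2 : q'.length < n := by omega
  rcases le_total p.length q'.length with h | h
  · have heq := hp_congr hfw h
      (by
        have e : q'.length - p.length = B - A := by omega
        rw [e]; exact Nat.dvd_sub gB gA) hi2
    rw [Fp, Fq'] at heq
    exact Bool.noConfusion heq
  · have heq := hp_congr hfw h
      (by
        have e : p.length - q'.length = A - B := by omega
        rw [e]; exact Nat.dvd_sub gA gB) hi1
    rw [Fq', Fp] at heq
    exact Bool.noConfusion heq

/-- If a central word has the form `u = p01q = q10p` with `p`, `q` palindromes,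
then `p` and `q` are central and uniquely determined by `u`. -/
theorem central_p01q (u p q : List Bool) (hu : Central u)
    (hp : p.reverse = p) (hq : q.reverse = q)
    (h1 : u = p ++ [false, true] ++ q) (h2 : u = q ++ [true, false] ++ p) :
    Central p ∧ Central q ∧
      ∀ p' q' : List Bool, p'.reverse = p' → q'.reverse = q' →
        u = p' ++ [false, true] ++ q' → u = q' ++ [true, false] ++ p' →
        p' = p ∧ q' = q := by
  obtain ⟨hupal, hub1, hub2⟩ := hu
  have e1 : false :: (u ++ [true]) = (false :: (q ++ [true])) ++ (false :: (p ++ [true])) := by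
    rw [h2]; simp
  have e2 : true :: (u ++ [false]) = (true :: (p ++ [false])) ++ (true :: (q ++ [false])) := by
    rw [h1]; simp
  refine ⟨⟨hp, ?_, ?_⟩, ⟨hq, ?_, ?_⟩, ?_⟩
  · exact balanced_infix hub1 (by rw [e1]; exact (List.suffix_append _ _).isInfix)
  · exact balanced_infix hub2 (by rw [e2]; exact (List.prefix_append _ _).isInfix)
  · exact balanced_infix hub1 (by rw [e1]; exact (List.prefix_append _ _).isInfix)
  · exact balanced_infix hub2 (by rw [e2]; exact (List.suffix_append _ _).isInfix)
  · intro p' q' hp' hq' h1' h2'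
    have hl : p'.length = p.length := by
      by_contra hne
      rcases Nat.lt_or_ge p.length p'.length with h | h
      · exact unique_aux u p q p' q' h1 h2 h1' h2' h
      · exact unique_aux u p' q' p q h1' h2' h1 h2 (by omega)
    have hppre : p <+: u := ⟨[false, true] ++ q, by rw [h1]; simp⟩
    have hp'pre : p' <+: u := ⟨[false, true] ++ q', by rw [h1']; simp⟩
    have hpp : p' = p :=
      (List.prefix_of_prefix_length_le hp'pre hppre (le_of_eq hl)).eq_of_length hl
    refine ⟨hpp, ?_⟩
    have e := h1.symm.trans h1'
    rw [hpp] at e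
    exact (List.append_cancel_left e).symm
end

section
/- Let v be a proper palindromic prefix of a central word u such that v is not a power of a single letter. Then either v01 or v10 is a prefix of u. -/
lemma replicate_of_cons_eq (a : Bool) :
    ∀ v : List Bool, a :: v = v ++ [a] → v = List.replicate v.length a := by
  intro v
  induction v with
  | nil => intro _; rfl
  | cons x t ih =>
    intro h
    simp only [List.cons_append] at h
    injection h with h1 h2
    subst h1
    rw [List.length_cons, List.replicate_succ]
    exact congrArg _ (ih h2)

lemma exists_decomp (c : Bool) : ∀ v : List Bool, (¬ ∃ n, v = List.replicate n c) →
    ∃ k q, v = List.replicate k c ++ (!c) :: q := by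
  intro v
  induction v with
  | nil => intro h; exact absurd ⟨0, rfl⟩ h
  | cons x t ih =>
    intro h
    by_cases hx : x = c
    · subst hx
      have ht : ¬ ∃ n, t = List.replicate n x := by
        rintro ⟨n, rfl⟩
        exact h ⟨n + 1, by simp [List.replicate_succ]⟩
      obtain ⟨k, q, hkq⟩ := ih ht
      exact ⟨k + 1, q, by simp [List.replicate_succ, hkq]⟩
    · have hx' : x = !c := by cases x <;> cases c <;> simp_all
      exact ⟨0, t, by simp [hx']⟩

lemma no_ff (v rest : List Bool)
    (hbal : BalancedWord (true :: ((v ++ false :: false :: rest) ++ [false])))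
    (hpal : v.reverse = v) (hnp : ¬ ∃ n, v = List.replicate n false) : False := by
  obtain ⟨k, q, hv⟩ := exists_decomp false v hnp
  simp only [Bool.not_false] at hv
  have hvr : v = q.reverse ++ true :: List.replicate k false := by
    conv_lhs => rw [← hpal, hv]
    simp
  have h1 : List.replicate (k + 2) false <:+:
      (true :: ((v ++ false :: false :: rest) ++ [false])) := by
    refine ⟨true :: q.reverse ++ [true], rest ++ [false], ?_⟩
    rw [hvr]
    simp [List.replicate_succ']
  have h2 : (true :: (List.replicate k false ++ [true])) <:+:
      (true :: ((v ++ false :: false :: rest) ++ [false])) := by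
    refine ⟨[], q ++ false :: false :: rest ++ [false], ?_⟩
    rw [hv]
    simp
  have hlen : (true :: (List.replicate k false ++ [true])).length =
      (List.replicate (k + 2) false).length := by simp
  have := hbal _ _ h2 h1 hlen
  simp [List.count_cons, List.count_append, List.count_replicate] at this

lemma no_tt (v rest : List Bool)
    (hbal : BalancedWord (false :: ((v ++ true :: true :: rest) ++ [true])))
    (hpal : v.reverse = v) (hnp : ¬ ∃ n, v = List.replicate n true) : False := by
  obtain ⟨k, q, hv⟩ := exists_decomp true v hnp
  simp only [Bool.not_true] at hv
  have hvr : v = q.reverse ++ false :: List.replicate k true := by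
    conv_lhs => rw [← hpal, hv]
    simp
  have h1 : List.replicate (k + 2) true <:+:
      (false :: ((v ++ true :: true :: rest) ++ [true])) := by
    refine ⟨false :: q.reverse ++ [false], rest ++ [true], ?_⟩
    rw [hvr]
    simp [List.replicate_succ']
  have h2 : (false :: (List.replicate k true ++ [false])) <:+:
      (false :: ((v ++ true :: true :: rest) ++ [true])) := by
    refine ⟨[], q ++ true :: true :: rest ++ [true], ?_⟩
    rw [hv]
    simp
  have hlen : (List.replicate (k + 2) true).length =
      (false :: (List.replicate k true ++ [false])).length := by simp
  have := hbal _ _ h1 h2 hlen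
  simp [List.count_cons, List.count_append, List.count_replicate] at this

/-- If `v` is a proper palindromic prefix of a central word `u` and `v` is not a power
of a single letter, then `v01` or `v10` is a prefix of `u`. -/
theorem central_prefix_extension (u v : List Bool) (hu : Central u)
    (hpref : v <+: u) (hproper : v.length < u.length) (hpal : v.reverse = v)
    (hnp : ¬ ∃ (a : Bool) (n : ℕ), v = List.replicate n a) :
    (v ++ [false, true]) <+: u ∨ (v ++ [true, false]) <+: u := by
  obtain ⟨t, rfl⟩ := hpref
  rcases t with _ | ⟨a, _ | ⟨b, rest⟩⟩
  · simp at hproper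
  · -- u = v ++ [a] : palindromicity forces v to be a power of a
    exfalso
    have h := hu.1
    rw [List.reverse_append, hpal] at h
    simp only [List.reverse_cons, List.reverse_nil, List.nil_append,
      List.singleton_append] at h
    exact hnp ⟨a, v.length, replicate_of_cons_eq a v h⟩
  · rcases a <;> rcases b
    · exact (no_ff v rest hu.2.2 hpal (fun ⟨n, hn⟩ => hnp ⟨false, n, hn⟩)).elim
    · exact Or.inl ⟨rest, by simp⟩
    · exact Or.inr ⟨rest, by simp⟩
    · exact (no_tt v rest hu.2.1 hpal (fun ⟨n, hn⟩ => hnp ⟨true, n, hn⟩)).elim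
end

section
/- A word v over {0,1} of length at least 2 is a lower Christoffel word if and only if v = 0u1 for some central word u; and v is an upper Christoffel word if and only if v = 1u0 for some central word u. Consequently, v is a lower Christoffel word of length at least 2 if and only if its reversal is an upper Christoffel word. -/
/-- The lower Christoffel word of slope `p/q`: the word of length `q` whose `n`-th letter
is `0` if `{n·p/q} < 1 - p/q` and `1` otherwise. -/
def lowerChrWord (p q : ℕ) : List Bool :=
  (List.range q).map (fun n => decide ((1 - (p : ℚ) / q) ≤ Int.fract ((n * p : ℕ) / (q : ℚ))))

/-- The upper Christoffel word of slope `p/q`: the word of length `q` whose `n`-th letter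
is `0` if `0 < {n·p/q} ≤ 1 - p/q` and `1` otherwise. -/
def upperChrWord (p q : ℕ) : List Bool :=
  (List.range q).map (fun n =>
    decide (Int.fract ((n * p : ℕ) / (q : ℚ)) = 0 ∨
      (1 - (p : ℚ) / q) < Int.fract ((n * p : ℕ) / (q : ℚ))))

/-- `v` is a lower Christoffel word (of some rational slope `p/q` in lowest terms). -/
def IsLowerChristoffelMech (v : List Bool) : Prop :=
  ∃ p q : ℕ, 0 < q ∧ p ≤ q ∧ Nat.Coprime p q ∧ v = lowerChrWord p q

/-- `v` is an upper Christoffel word (of some rational slope `p/q` in lowest terms). -/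
def IsUpperChristoffelMech (v : List Bool) : Prop :=
  ∃ p q : ℕ, 0 < q ∧ p ≤ q ∧ Nat.Coprime p q ∧ v = upperChrWord p q
namespace ChrAux

lemma fract_div (q m : ℕ) (hq : 0 < q) :
    Int.fract ((m : ℚ) / q) = ((m % q : ℕ) : ℚ) / q := by
  have hq' : ((q:ℚ)) ≠ 0 := by positivity
  conv_lhs => rw [← Nat.div_add_mod m q]
  push_cast
  rw [add_div, mul_div_cancel_left₀ _ hq', add_comm, Int.fract_add_natCast]
  refine Int.fract_eq_self.2 ⟨by positivity, ?_⟩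
  rw [div_lt_one (by positivity)]
  exact_mod_cast Nat.mod_lt m hq

lemma lower_cond (p q m : ℕ) (hq : 0 < q) (hpq : p ≤ q) :
    ((1 - (p : ℚ) / q) ≤ Int.fract ((m : ℚ) / q)) ↔ (q - p ≤ m % q) := by
  rw [fract_div q m hq]
  rw [show (1 - (p:ℚ)/q) = ((q - p : ℕ) : ℚ) / q by
    push_cast [hpq]; field_simp]
  rw [div_le_div_iff_of_pos_right (by positivity : (0:ℚ) < q)]
  exact_mod_cast Iff.rfl

lemma upper_cond (p q m : ℕ) (hq : 0 < q) (hpq : p ≤ q) :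
    (Int.fract ((m : ℚ) / q) = 0 ∨ (1 - (p : ℚ) / q) < Int.fract ((m : ℚ) / q)) ↔
      (m % q = 0 ∨ q - p < m % q) := by
  rw [fract_div q m hq]
  rw [show (1 - (p:ℚ)/q) = ((q - p : ℕ) : ℚ) / q by
    push_cast [hpq]; field_simp]
  rw [div_lt_div_iff_of_pos_right (by positivity : (0:ℚ) < q)]
  rw [div_eq_zero_iff]
  constructor
  · rintro (h | h)
    · left
      rcases h with h | h
      · exact_mod_cast h
      · exact absurd h (by positivity)
    · right; exact_mod_cast h
  · rintro (h | h)
    · left; left; exact_mod_cast h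
    · right; exact_mod_cast h

lemma lower_length (p q : ℕ) : (lowerChrWord p q).length = q := by
  simp [lowerChrWord]

lemma upper_length (p q : ℕ) : (upperChrWord p q).length = q := by
  simp [upperChrWord]

lemma lower_getElem (p q : ℕ) (hq : 0 < q) (hpq : p ≤ q) (n : ℕ)
    (h' : n < (lowerChrWord p q).length) :
    (lowerChrWord p q)[n] = decide (q - p ≤ n * p % q) := by
  simp only [lowerChrWord, List.getElem_map, List.getElem_range]
  rw [decide_eq_decide]
  exact lower_cond p q (n*p) hq hpq

lemma upper_getElem (p q : ℕ) (hq : 0 < q) (hpq : p ≤ q) (n : ℕ)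
    (h' : n < (upperChrWord p q).length) :
    (upperChrWord p q)[n] = decide (n * p % q = 0 ∨ q - p < n * p % q) := by
  simp only [upperChrWord, List.getElem_map, List.getElem_range]
  rw [decide_eq_decide]
  exact upper_cond p q (n*p) hq hpq


lemma infix_eq_drop_take {α : Type*} {u w : List α} (h : u <:+: w) :
    ∃ i, i + u.length ≤ w.length ∧ u = (w.drop i).take u.length := by
  obtain ⟨s, t, rfl⟩ := h
  refine ⟨s.length, by simp [List.length_append], ?_⟩
  rw [List.append_assoc, List.drop_left, List.take_left]

lemma drop_take_infix {α : Type*} (w : List α) (i m : ℕ) : (w.drop i).take m <:+: w :=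
  ((List.take_prefix m (w.drop i)).isInfix).trans (List.drop_suffix i w).isInfix

lemma take_count_step (w : List Bool) (n : ℕ) (h : n < w.length) :
    (w.take (n+1)).count true = (w.take n).count true + (if w[n] = true then 1 else 0) := by
  have e : w.take (n+1) = w.take n ++ [w[n]] := by
    rw [List.take_succ, List.getElem?_eq_getElem h]
    rfl
  rw [e, List.count_append, List.count_singleton']

lemma window_count (w : List Bool) (i m : ℕ) :
    (w.take (i+m)).count true = (w.take i).count true + ((w.drop i).take m).count true := by
  rw [List.take_add, List.count_append]

lemma window_length {α : Type*} (w : List α) (i m : ℕ) (h : i + m ≤ w.length) :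
    ((w.drop i).take m).length = m := by
  simp only [List.length_take, List.length_drop]
  omega

lemma lower_take_count (p q : ℕ) (hq : 0 < q) (hpq : p < q) :
    ∀ n, n ≤ q → ((lowerChrWord p q).take n).count true = n * p / q := by
  intro n
  induction n with
  | zero => simp
  | succ n ih =>
    intro hn
    have hn' : n < q := hn
    rw [take_count_step _ n (by rw [lower_length]; exact hn'), ih (le_of_lt hn'),
        lower_getElem p q hq (le_of_lt hpq) n (by rw [lower_length]; exact hn')]
    rw [show (n+1)*p = n*p + p by ring, Nat.add_div hq]
    have hp : p % q = p := Nat.mod_eq_of_lt hpq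
    have hpdiv : p / q = 0 := Nat.div_eq_of_lt hpq
    rw [hp, hpdiv]
    by_cases hc : q - p ≤ n * p % q
    · rw [if_pos (by simpa using hc), if_pos (by omega : q ≤ n*p%q + p)]
    · rw [if_neg (by simpa using hc), if_neg (by omega : ¬ q ≤ n*p%q + p)]

lemma lower_balanced (p q : ℕ) (hq : 0 < q) (hpq : p < q) :
    BalancedWord (lowerChrWord p q) := by
  intro x y hx hy hlen
  obtain ⟨i, hi, hxe⟩ := infix_eq_drop_take hx
  obtain ⟨j, hj, hye⟩ := infix_eq_drop_take hy
  set L := lowerChrWord p q with hL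
  set m := x.length with hm
  have hiq : i + m ≤ q := by rwa [lower_length] at hi
  have hjq : j + m ≤ q := by rw [← hlen] at hj; rwa [lower_length] at hj
  have hx' : i*p/q + x.count true = (i+m)*p/q := by
    rw [← lower_take_count p q hq hpq i (by omega), ← lower_take_count p q hq hpq (i+m) hiq,
        window_count, hxe]
  have hy' : j*p/q + y.count true = (j+m)*p/q := by
    rw [← lower_take_count p q hq hpq j (by omega), ← lower_take_count p q hq hpq (j+m) hjq,
        window_count]
    congr 2
    rw [hye, hlen]
  have b1 : i*p/q + m*p/q ≤ (i+m)*p/q ∧ (i+m)*p/q ≤ i*p/q + m*p/q + 1 := by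
    rw [show (i+m)*p = i*p + m*p by ring, Nat.add_div hq]
    split <;> omega
  have b2 : j*p/q + m*p/q ≤ (j+m)*p/q ∧ (j+m)*p/q ≤ j*p/q + m*p/q + 1 := by
    rw [show (j+m)*p = j*p + m*p by ring, Nat.add_div hq]
    split <;> omega
  omega


lemma modne (p q j : ℕ) (hq : 0 < q) (hco : Nat.Coprime p q) (h1 : 1 ≤ j) (h2 : j < q) :
    j * p % q ≠ 0 := by
  intro h
  have hdvd : q ∣ j * p := Nat.dvd_of_mod_eq_zero h
  have hj : q ∣ j := Nat.Coprime.dvd_of_dvd_mul_right hco.symm hdvd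
  have := Nat.le_of_dvd (by omega) hj
  omega

lemma lastmod (p q : ℕ) (hp1 : 1 ≤ p) (hpq : p < q) : (q - 1) * p % q = q - p := by
  have e : (q - 1) * p = (q - p) + (p - 1) * q := by
    have h2 : 1 ≤ q := by omega
    have h3 : p ≤ q := le_of_lt hpq
    zify [hp1, h2, h3]
    ring
  rw [e, Nat.add_mul_mod_self_right, Nat.mod_eq_of_lt (by omega)]

lemma succmod (p q j : ℕ) (hpq : p < q) : (j + 1) * p % q = (j * p % q + p) % q := by
  conv_lhs => rw [add_mul, one_mul]
  rw [Nat.add_mod, Nat.mod_eq_of_lt hpq]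

lemma pair_mod (p q a b : ℕ) (hq : 0 < q) (hab : a + b = q) (hb : b * p % q ≠ 0) :
    a * p % q = q - b * p % q := by
  have h0 : (a * p + b * p) % q = 0 := by
    rw [← add_mul, hab, mul_comm]
    simp [Nat.mul_mod_right]
  rw [Nat.add_mod] at h0
  have hdvd := Nat.dvd_of_mod_eq_zero h0
  have h1 : a * p % q < q := Nat.mod_lt _ (by omega)
  have h2 : b * p % q < q := Nat.mod_lt _ (by omega)
  have heq : a * p % q + b * p % q = q :=
    Nat.eq_of_dvd_of_lt_two_mul (by omega) hdvd (by omega)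
  omega

lemma pal_letters (p q : ℕ) (hq : 2 ≤ q) (hp1 : 1 ≤ p) (hpq : p < q) (hco : Nat.Coprime p q)
    (j : ℕ) (h1 : 1 ≤ j) (h2 : j ≤ q - 2) :
    (q - p ≤ j * p % q ↔ q - p ≤ (q - 1 - j) * p % q) := by
  have hb1 : j * p % q ≠ 0 := modne p q j (by omega) hco h1 (by omega)
  have hbq : j * p % q < q := Nat.mod_lt _ (by omega)
  have hc1 : (j + 1) * p % q ≠ 0 := modne p q (j+1) (by omega) hco (by omega) (by omega)
  have hcq : (j + 1) * p % q < q := Nat.mod_lt _ (by omega)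
  have hd : (q - 1 - j) * p % q = q - (j + 1) * p % q :=
    pair_mod p q (q - 1 - j) (j + 1) (by omega) (by omega) hc1
  have hstep : (j + 1) * p % q = (j * p % q + p) % q := succmod p q j hpq
  have hcval : (q ≤ j * p % q + p ∧ (j + 1) * p % q = j * p % q + p - q) ∨
      (j * p % q + p < q ∧ (j + 1) * p % q = j * p % q + p) := by
    by_cases h : q ≤ j * p % q + p
    · left
      refine ⟨h, ?_⟩
      rw [hstep, Nat.mod_eq_sub_mod h, Nat.mod_eq_of_lt (by omega)]
    · right
      exact ⟨by omega, by rw [hstep, Nat.mod_eq_of_lt (by omega)]⟩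
  rw [hd]
  omega


lemma balanced_reverse {w : List Bool} (h : BalancedWord w) : BalancedWord w.reverse := by
  intro x y hx hy hlen
  have hx' : x.reverse <:+: w := by
    rw [← List.reverse_reverse w]
    exact List.reverse_infix.mpr (by simpa using hx)
  have hy' : y.reverse <:+: w := by
    rw [← List.reverse_reverse w]
    exact List.reverse_infix.mpr (by simpa using hy)
  have := h x.reverse y.reverse hx' hy' (by simpa using hlen)
  simpa using this

/-- the middle part of the lower Christoffel word -/
def midWord (p q : ℕ) : List Bool :=
  (List.range' 1 (q-2)).map
    (fun n => decide ((1 - (p : ℚ) / q) ≤ Int.fract ((n * p : ℕ) / (q : ℚ))))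

lemma g_eq_nat (p q n : ℕ) (hq : 0 < q) (hpq : p ≤ q) :
    (decide ((1 - (p : ℚ) / q) ≤ Int.fract ((n * p : ℕ) / (q : ℚ)))) =
      decide (q - p ≤ n * p % q) := by
  rw [decide_eq_decide]
  exact lower_cond p q (n * p) hq hpq

lemma lower_decomp (p q : ℕ) (hq : 2 ≤ q) (hp1 : 1 ≤ p) (hpq : p < q) :
    lowerChrWord p q = false :: (midWord p q ++ [true]) := by
  obtain ⟨k, rfl⟩ : ∃ k, q = k + 2 := ⟨q - 2, by omega⟩
  unfold lowerChrWord midWord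
  rw [List.range_eq_range']
  rw [show List.range' 0 (k+2) = List.range' 0 (k+1) ++ [0+1*(k+1)] from List.range'_concat (s := 0) (n := k+1),
      show List.range' 0 (k+1) = 0 :: List.range' (0+1) k from List.range'_succ (s := 0) (n := k) (step := 1)]
  rw [List.map_append, List.map_cons, List.map_singleton]
  have e0 : (decide ((1 - (p : ℚ) / (k+2:ℕ)) ≤ Int.fract (((0 * p : ℕ) : ℚ) / ((k+2:ℕ) : ℚ)))) = false := by
    rw [g_eq_nat p (k+2) 0 (by omega) (le_of_lt hpq)]
    simp only [Nat.zero_mul, Nat.zero_mod]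
    simp
    omega
  have e1 : (decide ((1 - (p : ℚ) / (k+2:ℕ)) ≤ Int.fract ((((k+1) * p : ℕ) : ℚ) / ((k+2:ℕ) : ℚ)))) = true := by
    rw [g_eq_nat p (k+2) (k+1) (by omega) (le_of_lt hpq)]
    rw [show k+1 = (k+2) - 1 by omega, lastmod p (k+2) hp1 hpq]
    simp
  simp only [Nat.zero_add, Nat.one_mul, Nat.add_sub_cancel] at *
  rw [e0, e1]
  simp

lemma mid_length (p q : ℕ) : (midWord p q).length = q - 2 := by simp [midWord]

lemma mid_pal (p q : ℕ) (hq : 2 ≤ q) (hp1 : 1 ≤ p) (hpq : p < q) (hco : Nat.Coprime p q) :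
    (midWord p q).reverse = midWord p q := by
  apply List.ext_getElem (by simp)
  intro n h1 h2
  rw [List.getElem_reverse]
  simp only [midWord, List.getElem_map, List.getElem_range', List.length_map,
    List.length_range', one_mul]
  rw [g_eq_nat p q _ (by omega) (le_of_lt hpq), g_eq_nat p q _ (by omega) (le_of_lt hpq),
      decide_eq_decide]
  have hn : n < q - 2 := by simpa [midWord] using h2
  rw [show 1 + (q - 2 - 1 - n) = q - 1 - (1 + n) by omega]
  exact (pal_letters p q hq hp1 hpq hco (1+n) (by omega) (by omega)).symm

lemma upper_eq_rev (p q : ℕ) (hq : 2 ≤ q) (hp1 : 1 ≤ p) (hpq : p < q) (hco : Nat.Coprime p q) :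
    upperChrWord p q = (lowerChrWord p q).reverse := by
  apply List.ext_getElem (by simp [upper_length, lower_length])
  intro n h1 h2
  have hn : n < q := by simpa [upper_length] using h1
  rw [List.getElem_reverse]
  rw [upper_getElem p q (by omega) (le_of_lt hpq) n h1]
  rw [lower_getElem p q (by omega) (le_of_lt hpq) _ (by simpa [lower_length] using (show q - 1 - n < q by omega))]
  rw [decide_eq_decide, lower_length]
  by_cases h0 : n = 0
  · subst h0
    simp only [Nat.zero_mul, Nat.zero_mod]
    rw [show q - 1 - 0 = q - 1 by omega, lastmod p q hp1 hpq]
    simp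
  by_cases hl : n = q - 1
  · subst hl
    rw [lastmod p q hp1 hpq, show q - 1 - (q-1) = 0 by omega]
    simp only [Nat.zero_mul, Nat.zero_mod]
    omega
  · -- 1 ≤ n ≤ q - 2
    have hn1 : 1 ≤ n := by omega
    have hn2 : n ≤ q - 2 := by omega
    have hb1 : n * p % q ≠ 0 := modne p q n (by omega) hco hn1 (by omega)
    have hbq : n * p % q < q := Nat.mod_lt _ (by omega)
    have hc1 : (n + 1) * p % q ≠ 0 := modne p q (n+1) (by omega) hco (by omega) (by omega)
    have hcq : (n + 1) * p % q < q := Nat.mod_lt _ (by omega)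
    have hd : (q - 1 - n) * p % q = q - (n + 1) * p % q :=
      pair_mod p q (q - 1 - n) (n + 1) (by omega) (by omega) hc1
    have hstep : (n + 1) * p % q = (n * p % q + p) % q := succmod p q n hpq
    have hcval : (q ≤ n * p % q + p ∧ (n + 1) * p % q = n * p % q + p - q) ∨
        (n * p % q + p < q ∧ (n + 1) * p % q = n * p % q + p) := by
      by_cases h : q ≤ n * p % q + p
      · left
        refine ⟨h, ?_⟩
        rw [hstep, Nat.mod_eq_sub_mod h, Nat.mod_eq_of_lt (by omega)]
      · right
        exact ⟨by omega, by rw [hstep, Nat.mod_eq_of_lt (by omega)]⟩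
    rw [hd]
    omega


lemma pal_count (u : List Bool) (hpal : u.reverse = u) (a : ℕ) (ha : a ≤ u.length) :
    (u.take a).count true + (u.take (u.length - a)).count true = u.count true := by
  have e : u.take (u.length - a) = (u.drop a).reverse := by
    rw [List.reverse_drop, hpal]
  rw [e, List.count_reverse]
  rw [← List.count_append]
  rw [List.take_append_drop]

lemma cons_take_count (u : List Bool) (n : ℕ) (h1 : 1 ≤ n) (h2 : n ≤ u.length + 1) :
    ((false :: (u ++ [true])).take n).count true = (u.take (n-1)).count true := by
  obtain ⟨m, rfl⟩ : ∃ m, n = m + 1 := ⟨n - 1, by omega⟩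
  rw [List.take_succ_cons]
  simp only [List.count_cons, Nat.add_sub_cancel]
  rw [List.take_append, show m - u.length = 0 by omega]
  simp


set_option maxHeartbeats 1000000 in
lemma key_claim (u : List Bool) (hpal : u.reverse = u)
    (hbal : BalancedWord (false :: (u ++ [true]))) :
    ∀ n, 1 ≤ n → n ≤ u.length + 1 →
      (u.length + 2) * (((false :: (u ++ [true])).take n).count true) < n * (u.count true + 1) ∧
      n * (u.count true + 1) <
        (u.length + 2) * (((false :: (u ++ [true])).take n).count true) + (u.length + 2) := by
  set w := false :: (u ++ [true]) with hw
  set q := u.length + 2 with hqdef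
  set p := u.count true + 1 with hpdef
  set f : ℕ → ℕ := fun n => ((w.take n).count true) with hf
  have hwl : w.length = q := by simp [hw, hqdef]
  have hp1 : 1 ≤ p := by omega
  have hpq : p < q := by
    have := List.count_le_length (a := true) (l := u)
    omega
  have hfq : f q = p := by
    simp only [hf, ← hwl, List.take_length]
    simp [hw, hpdef, List.count_append, List.count_cons]
  have hfu : ∀ n, 1 ≤ n → n ≤ u.length + 1 → f n = (u.take (n-1)).count true := by
    intro n h1 h2
    exact cons_take_count u n h1 h2
  have hstar : ∀ n, 1 ≤ n → n ≤ q - 1 → f n + f (q - n) = p - 1 := by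
    intro n h1 h2
    rw [hfu n h1 (by omega), hfu (q - n) (by omega) (by omega)]
    have e : q - n - 1 = u.length - (n - 1) := by omega
    rw [e]
    simpa [hpdef] using pal_count u hpal (n-1) (by omega)
  -- windows
  set cnt : ℕ → ℕ → ℕ := fun i m => (((w.drop i).take m).count true) with hcnt
  have hwin : ∀ i m, f (i + m) = f i + cnt i m := by
    intro i m
    exact window_count w i m
  have hcnt0 : ∀ m, cnt 0 m = f m := by intro m; simp [hcnt, hf]
  have hbal' : ∀ i j m, i + m ≤ q → j + m ≤ q → cnt i m ≤ cnt j m + 1 := by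
    intro i j m hi hj
    exact hbal _ _ (drop_take_infix w i m) (drop_take_infix w j m)
      (by rw [window_length w i m (by omega), window_length w j m (by omega)])
  have hsuf : ∀ n, 1 ≤ n → n ≤ q - 1 → cnt (q - n) n = f n + 1 := by
    intro n h1 h2
    have h3 := hwin (q - n) n
    rw [show q - n + n = q by omega] at h3
    have h4 := hstar n h1 h2
    omega
  have hlohi : ∀ n i, 1 ≤ n → n ≤ q - 1 → i + n ≤ q → f n ≤ cnt i n ∧ cnt i n ≤ f n + 1 := by
    intro n i h1 h2 hi
    constructor
    · have := hbal' (q - n) i n (by omega) hi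
      rw [hsuf n h1 h2] at this
      omega
    · have := hbal' i 0 n hi (by omega)
      rw [hcnt0 n] at this
      omega
  intro n
  induction n using Nat.strong_induction_on with
  | _ n ih =>
    intro hn1 hn2
    have hnq : n ≤ q - 1 := by omega
    have hmul_lo : ∀ t, n * t ≤ q → t * f n ≤ f (n * t) := by
      intro t
      induction t with
      | zero => simp
      | succ t iht =>
        intro ht
        rw [Nat.mul_succ] at ht ⊢
        rw [hwin (n * t) n]
        have h1 := iht (by omega)
        have h2 := (hlohi n (n * t) hn1 hnq (by omega)).1
        have e : (t + 1) * f n = t * f n + f n := by ring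
        omega
    have hmul_hi : ∀ a t, a + n * t ≤ q → f (a + n * t) ≤ f a + t * (f n + 1) := by
      intro a t
      induction t with
      | zero => simp
      | succ t iht =>
        intro ht
        rw [Nat.mul_succ] at ht ⊢
        rw [← Nat.add_assoc, hwin (a + n * t) n]
        have h1 := iht (by omega)
        have h2 := (hlohi n (a + n * t) hn1 hnq (by omega)).2
        have e : (t + 1) * (f n + 1) = t * (f n + 1) + (f n + 1) := by ring
        omega
    obtain ⟨s', hs'⟩ : ∃ s', q / n = s' + 1 := by
      refine ⟨q / n - 1, ?_⟩
      have : 1 ≤ q / n := (Nat.one_le_div_iff (by omega)).2 (by omega)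
      omega
    set s := s' + 1 with hsdef
    set r := q % n with hrdef
    have hsr : n * s + r = q := by rw [← hs']; exact Nat.div_add_mod q n
    have hrn : r < n := Nat.mod_lt q (by omega)
    have hsr' : n * s' + n + r = q := by
      rw [← hsr, hsdef, Nat.mul_succ]
    have hsexp : s * f n = s' * f n + f n := by rw [hsdef]; ring
    have hsexp2 : s * (f n + 1) = s' * (f n + 1) + f n + 1 := by rw [hsdef]; ring
    -- lower bound B1 : s * f n + f r + 1 ≤ p
    have hB1 : s * f n + f r + 1 ≤ p := by
      by_cases hr0 : r = 0
      · have e1 : f q = f (n * s') + cnt (n * s') n := by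
          rw [← hwin (n * s') n, show n * s' + n = q by omega]
        have e2 : cnt (n * s') n = f n + 1 := by
          have := hsuf n hn1 hnq
          rw [show q - n = n * s' by omega] at this
          exact this
        have e3 := hmul_lo s' (by omega)
        have hfr : f r = 0 := by simp [hr0, hf]
        omega
      · have e1 : f q = f (n * s) + cnt (n * s) r := by
          rw [← hwin (n * s) r, hsr]
        have e2 : cnt (n * s) r = f r + 1 := by
          have := hsuf r (by omega) (by omega)
          rw [show q - r = n * s by omega] at this
          exact this
        have e3 := hmul_lo s (by omega)
        omega
    -- upper bounds B2
    have hB2 : (r = 0 → p + 1 ≤ s * f n + s) ∧ (1 ≤ r → p ≤ s * f n + f r + s) := by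
      constructor
      · intro hr0
        have e1 : f (n + n * s') ≤ f n + s' * (f n + 1) := hmul_hi n s' (by omega)
        rw [show n + n * s' = q by omega] at e1
        have e4 : s' * (f n + 1) = s' * f n + s' := by ring
        omega
      · intro hr1
        have e1 : f (r + n * s) ≤ f r + s * (f n + 1) := hmul_hi r s (by omega)
        rw [show r + n * s = q by omega] at e1
        have e4 : s * (f n + 1) = s * f n + s := by ring
        omega
    -- integer arithmetic
    have hsrZ : (n:ℤ) * s + r = q := by exact_mod_cast hsr
    have hqZ : (2:ℤ) ≤ (q:ℤ) := by exact_mod_cast (show 2 ≤ q by omega)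
    have hsZ : (1:ℤ) ≤ (s:ℤ) := by exact_mod_cast (show 1 ≤ s by omega)
    have main : 0 < (n:ℤ) * p - q * f n ∧ (n:ℤ) * p - q * f n < q := by
      have h3 : (s:ℤ) * f n + f r + 1 ≤ p := by exact_mod_cast hB1
      by_cases hr0 : r = 0
      · have hfr : f r = 0 := by simp [hr0, hf]
        have hfrZ : ((f r : ℤ)) = 0 := by exact_mod_cast hfr
        have h4 : (p:ℤ) + 1 ≤ s * f n + s := by exact_mod_cast hB2.1 hr0
        have hrZ : ((r:ℤ)) = 0 := by exact_mod_cast hr0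
        have key : (s:ℤ) * ((n:ℤ) * p - q * f n) =
            q * ((p:ℤ) - s * f n) := by
          linear_combination (p:ℤ) * hsrZ - (p:ℤ) * hrZ
        have ht1 : 1 ≤ (p:ℤ) - s * f n := by linarith
        have ht2 : (p:ℤ) - s * f n ≤ s - 1 := by linarith
        have hu1 : (q:ℤ) * 1 ≤ q * ((p:ℤ) - s * f n) :=
          mul_le_mul_of_nonneg_left ht1 (by linarith)
        have hu2 : (q:ℤ) * ((p:ℤ) - s * f n) ≤ q * ((s:ℤ) - 1) :=
          mul_le_mul_of_nonneg_left ht2 (by linarith)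
        have hc : (q:ℤ) * ((s:ℤ) - 1) = s * q - q := by ring
        have hc2 : (s:ℤ) * q = q * s := by ring
        have hX1 : 0 < (s:ℤ) * ((n:ℤ) * p - q * f n) := by rw [key]; linarith
        have hX2 : (s:ℤ) * ((n:ℤ) * p - q * f n) < s * q := by rw [key]; linarith
        constructor
        · have h0 : (s:ℤ) * 0 < s * ((n:ℤ) * p - q * f n) := by
            rw [mul_zero]
            exact hX1
          exact lt_of_mul_lt_mul_left h0 (by linarith)
        · exact lt_of_mul_lt_mul_left hX2 (by linarith)
      · have hr1 : 1 ≤ r := by omega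
        have ihr := ih r hrn hr1 (by omega)
        have h1 : (q:ℤ) * f r < r * p := by exact_mod_cast ihr.1
        have h2 : (r:ℤ) * p < q * f r + q := by exact_mod_cast ihr.2
        have h4 : (p:ℤ) ≤ s * f n + f r + s := by exact_mod_cast hB2.2 hr1
        have key : (s:ℤ) * ((n:ℤ) * p - q * f n) =
            q * ((p:ℤ) - s * f n - f r) - ((r:ℤ) * p - q * f r) := by
          linear_combination (p:ℤ) * hsrZ
        have ht1 : 1 ≤ (p:ℤ) - s * f n - f r := by linarith
        have ht2 : (p:ℤ) - s * f n - f r ≤ s := by linarith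
        have hu1 : (q:ℤ) * 1 ≤ q * ((p:ℤ) - s * f n - f r) :=
          mul_le_mul_of_nonneg_left ht1 (by linarith)
        have hu2 : (q:ℤ) * ((p:ℤ) - s * f n - f r) ≤ q * (s:ℤ) :=
          mul_le_mul_of_nonneg_left ht2 (by linarith)
        have hc2 : (s:ℤ) * q = q * s := by ring
        have hX1 : 0 < (s:ℤ) * ((n:ℤ) * p - q * f n) := by rw [key]; linarith
        have hX2 : (s:ℤ) * ((n:ℤ) * p - q * f n) < s * q := by rw [key]; linarith
        constructor
        · have h0 : (s:ℤ) * 0 < s * ((n:ℤ) * p - q * f n) := by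
            rw [mul_zero]
            exact hX1
          exact lt_of_mul_lt_mul_left h0 (by linarith)
        · exact lt_of_mul_lt_mul_left hX2 (by linarith)
    constructor
    · have g1 : (q:ℤ) * f n < n * p := by linarith [main.1]
      exact_mod_cast g1
    · have g2 : (n:ℤ) * p < q * f n + q := by linarith [main.2]
      exact_mod_cast g2


set_option maxHeartbeats 1000000 in
lemma central_to_lower (u : List Bool) (hpal : u.reverse = u)
    (hbal : BalancedWord (false :: (u ++ [true]))) :
    false :: (u ++ [true]) = lowerChrWord (u.count true + 1) (u.length + 2) ∧
      Nat.Coprime (u.count true + 1) (u.length + 2) := by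
  set w := false :: (u ++ [true]) with hw
  set q := u.length + 2 with hq
  set p := u.count true + 1 with hp
  have hq0 : 0 < q := by omega
  have hq2 : 2 ≤ q := by omega
  have hwl : w.length = q := by simp [hw, hq]
  have hpq : p < q := by have := List.count_le_length (a := true) (l := u); omega
  have hp1 : 1 ≤ p := by omega
  have hclaim' : ∀ n, 1 ≤ n → n ≤ q - 1 →
      q * ((w.take n).count true) < n * p ∧ n * p < q * ((w.take n).count true) + q := by
    intro n h1 h2
    exact key_claim u hpal hbal n h1 (by omega)
  have hfq : (w.take q).count true = p := by
    rw [← hwl, List.take_length]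
    simp [hw, hp, List.count_append, List.count_cons]
  have hdiv : ∀ n, n ≤ q → (w.take n).count true = n * p / q := by
    intro n hn
    rcases Nat.eq_zero_or_pos n with h0 | h0
    · subst h0; simp
    rcases Nat.eq_or_lt_of_le hn with hnq | hnq
    · subst hnq
      rw [hfq]
      exact (Nat.mul_div_cancel_left p hq0).symm
    · have hcl := hclaim' n h0 (by omega)
      have e1 : q * ((w.take n).count true) = ((w.take n).count true) * q := by ring
      have e2 : ((w.take n).count true + 1) * q = q * ((w.take n).count true) + q := by ring
      exact (Nat.div_eq_of_lt_le (by omega) (by omega)).symm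
  have hcop : Nat.Coprime p q := by
    by_contra hg
    have hg1 : Nat.gcd p q ≠ 1 := hg
    have hgq : Nat.gcd p q ∣ q := Nat.gcd_dvd_right p q
    have hgp : Nat.gcd p q ∣ p := Nat.gcd_dvd_left p q
    have hg0 : Nat.gcd p q ≠ 0 := by
      intro h
      have := Nat.eq_zero_of_gcd_eq_zero_right h
      omega
    have hg2 : 2 ≤ Nat.gcd p q := by omega
    obtain ⟨p', hp'⟩ := hgp
    obtain ⟨q', hq'⟩ := hgq
    have hq1 : 1 ≤ q' := by
      rcases Nat.eq_zero_or_pos q' with h | h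
      · rw [h, Nat.mul_zero] at hq'; omega
      · omega
    have h2q : 2 * q' ≤ q := by
      rw [hq']
      exact Nat.mul_le_mul_right q' hg2
    have hdvd : q' * p = q * p' := by
      calc q' * p = q' * (Nat.gcd p q * p') := by rw [← hp']
        _ = (Nat.gcd p q * q') * p' := by ring
        _ = q * p' := by rw [← hq']
    have hcl := hclaim' q' hq1 (by omega)
    rw [hdvd] at hcl
    have l1 : (w.take q').count true < p' := Nat.lt_of_mul_lt_mul_left hcl.1
    have l2 : p' < (w.take q').count true + 1 := by
      apply Nat.lt_of_mul_lt_mul_left (a := q)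
      have e : q * ((w.take q').count true + 1) = q * ((w.take q').count true) + q := by ring
      omega
    omega
  refine ⟨?_, hcop⟩
  apply List.ext_getElem (by rw [hwl, lower_length])
  intro n h1 h2
  have hn : n < q := by omega
  rw [lower_getElem p q hq0 (le_of_lt hpq) n h2]
  have hstep := take_count_step w n (by omega)
  have hfn := hdiv n (by omega)
  have hfn1 := hdiv (n+1) (by omega)
  have hd : (n+1) * p / q = n * p / q + (if q - p ≤ n * p % q then 1 else 0) := by
    rw [show (n+1) * p = n * p + p by ring, Nat.add_div hq0,
        Nat.mod_eq_of_lt hpq, Nat.div_eq_of_lt hpq]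
    by_cases hc : q - p ≤ n * p % q
    · rw [if_pos hc, if_pos (by omega : q ≤ n * p % q + p)]
    · rw [if_neg hc, if_neg (by omega : ¬ q ≤ n * p % q + p)]
  by_cases hc : q - p ≤ n * p % q
  · rw [if_pos hc] at hd
    rw [decide_eq_true hc]
    cases hb : w[n] with
    | true => rfl
    | false =>
      exfalso
      rw [hb] at hstep
      simp at hstep
      omega
  · rw [if_neg hc] at hd
    rw [decide_eq_false hc]
    cases hb : w[n] with
    | false => rfl
    | true =>
      exfalso
      rw [hb] at hstep
      simp at hstep
      omega

lemma rev01 (u : List Bool) (hpal : u.reverse = u) :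
    (false :: (u ++ [true])).reverse = true :: (u ++ [false]) := by
  simp [List.reverse_cons, List.reverse_append, hpal]

lemma lower_is_central (p q : ℕ) (hq2 : 2 ≤ q) (hp1 : 1 ≤ p) (hpq : p < q)
    (hco : Nat.Coprime p q) :
    Central (midWord p q) ∧ lowerChrWord p q = false :: (midWord p q ++ [true]) := by
  have hdec := lower_decomp p q hq2 hp1 hpq
  have hmp := mid_pal p q hq2 hp1 hpq hco
  have hbal := lower_balanced p q (by omega) hpq
  refine ⟨⟨hmp, ?_, ?_⟩, hdec⟩
  · rw [← hdec]; exact hbal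
  · rw [show (true : Bool) :: (midWord p q ++ [false]) =
        (false :: (midWord p q ++ [true])).reverse from (rev01 _ hmp).symm, ← hdec]
    exact balanced_reverse hbal


lemma rev10 (u : List Bool) (hpal : u.reverse = u) :
    (true :: (u ++ [false])).reverse = false :: (u ++ [true]) := by
  simp [List.reverse_cons, List.reverse_append, hpal]

lemma slope_facts (p q : ℕ) (hq2 : 2 ≤ q) (hpq : p ≤ q) (hco : Nat.Coprime p q) :
    1 ≤ p ∧ p < q := by
  constructor
  · rcases Nat.eq_zero_or_pos p with h | h
    · subst h
      rw [Nat.coprime_zero_left] at hco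
      omega
    · exact h
  · rcases Nat.eq_or_lt_of_le hpq with h | h
    · exfalso
      subst h
      have : p = 1 := by
        have h2 := hco
        rw [Nat.Coprime, Nat.gcd_self] at h2
        exact h2
      omega
    · exact h

lemma lower_iff (v : List Bool) (hv : 2 ≤ v.length) :
    IsLowerChristoffelMech v ↔ ∃ u, Central u ∧ v = false :: (u ++ [true]) := by
  constructor
  · rintro ⟨p, q, hq0, hpq, hco, rfl⟩
    have hq2 : 2 ≤ q := by simpa [lower_length] using hv
    obtain ⟨hp1, hplt⟩ := slope_facts p q hq2 hpq hco
    obtain ⟨hc, hdec⟩ := lower_is_central p q hq2 hp1 hplt hco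
    exact ⟨midWord p q, hc, hdec⟩
  · rintro ⟨u, ⟨hpal, hb1, hb2⟩, rfl⟩
    obtain ⟨heq, hcop⟩ := central_to_lower u hpal hb1
    exact ⟨u.count true + 1, u.length + 2, by omega,
      by have := List.count_le_length (a := true) (l := u); omega, hcop, heq⟩

lemma upper_iff_lower_rev (v : List Bool) (hv : 2 ≤ v.length) :
    IsUpperChristoffelMech v ↔ IsLowerChristoffelMech v.reverse := by
  constructor
  · rintro ⟨p, q, hq0, hpq, hco, rfl⟩
    have hq2 : 2 ≤ q := by simpa [upper_length] using hv
    obtain ⟨hp1, hplt⟩ := slope_facts p q hq2 hpq hco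
    rw [upper_eq_rev p q hq2 hp1 hplt hco, List.reverse_reverse]
    exact ⟨p, q, hq0, hpq, hco, rfl⟩
  · rintro ⟨p, q, hq0, hpq, hco, hrev⟩
    have hq2 : 2 ≤ q := by
      have : v.reverse.length = q := by rw [hrev, lower_length]
      simp at this
      omega
    obtain ⟨hp1, hplt⟩ := slope_facts p q hq2 hpq hco
    refine ⟨p, q, hq0, hpq, hco, ?_⟩
    rw [upper_eq_rev p q hq2 hp1 hplt hco, ← hrev, List.reverse_reverse]

end ChrAux

/-- A word of length at least 2 is a lower (resp. upper) Christoffel word iff it is `0u1`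
(resp. `1u0`) for a central word `u`; consequently it is lower Christoffel iff its
reversal is upper Christoffel. -/
theorem christoffel_central_characterization (v : List Bool) (hv : 2 ≤ v.length) :
    (IsLowerChristoffelMech v ↔ ∃ u, Central u ∧ v = false :: (u ++ [true])) ∧
    (IsUpperChristoffelMech v ↔ ∃ u, Central u ∧ v = true :: (u ++ [false])) ∧
    (IsLowerChristoffelMech v ↔ IsUpperChristoffelMech v.reverse) := by
  have hvr : 2 ≤ v.reverse.length := by simpa using hv
  have h3 : IsLowerChristoffelMech v ↔ IsUpperChristoffelMech v.reverse := by
    rw [ChrAux.upper_iff_lower_rev v.reverse hvr, List.reverse_reverse]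
  have h2 : IsUpperChristoffelMech v ↔ ∃ u, Central u ∧ v = true :: (u ++ [false]) := by
    rw [ChrAux.upper_iff_lower_rev v hv, ChrAux.lower_iff v.reverse hvr]
    constructor
    · rintro ⟨u, hc, he⟩
      refine ⟨u, hc, ?_⟩
      rw [← List.reverse_reverse v, he, ChrAux.rev01 u hc.1]
    · rintro ⟨u, hc, rfl⟩
      exact ⟨u, hc, by rw [ChrAux.rev10 u hc.1]⟩
  exact ⟨ChrAux.lower_iff v hv, h2, h3⟩
end

section
/- If u, v, and uv are all lower Christoffel words, then both u²v and uv² are lower Christoffel words. -/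
/-- Lower Christoffel words: the letters `0`, `1` and the words `0u1` with `u` central. -/
def IsLowerChristoffel (v : List Bool) : Prop :=
  v = [false] ∨ v = [true] ∨ ∃ u, Central u ∧ v = false :: (u ++ [true])

/-- Upper Christoffel words: the letters `0`, `1` and the words `1u0` with `u` central. -/
def IsUpperChristoffel (v : List Bool) : Prop :=
  v = [false] ∨ v = [true] ∨ ∃ u, Central u ∧ v = true :: (u ++ [false])

/-- Christoffel words (lower or upper). -/
def IsChristoffel (v : List Bool) : Prop := IsLowerChristoffel v ∨ IsUpperChristoffel v

namespace ChristoffelAux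

/-- the `i`-th letter of the mechanical word of counts `(n-b, b)`. -/
def Wl (n b i : ℕ) : Bool := decide (i*b/n < (i+1)*b/n)

/-- the lower mechanical word with `a` zeros and `b` ones. -/
def W (a b : ℕ) : List Bool := (List.range (a+b)).map (Wl (a+b) b)

@[simp] lemma length_W (a b : ℕ) : (W a b).length = a + b := by
  simp [W]

lemma getElem_W (a b i : ℕ) (h : i < a + b) :
    (W a b)[i]'(by simpa using h) = Wl (a+b) b i := by
  simp [W]

/-- prefix count of ones -/
def pc (w : List Bool) (k : ℕ) : ℕ := ((w.take k).count true)

@[simp] lemma pc_zero (w : List Bool) : pc w 0 = 0 := rfl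

lemma pc_full (w : List Bool) (k : ℕ) (h : w.length ≤ k) : pc w k = w.count true := by
  simp [pc, List.take_of_length_le h]

lemma pc_succ (w : List Bool) (i : ℕ) (h : i < w.length) :
    pc w (i+1) = pc w i + (if w[i] = true then 1 else 0) := by
  unfold pc
  rw [List.take_succ, List.getElem?_eq_getElem h]
  cases hb : w[i] <;> simp [hb, List.count_append]

lemma count_bool (l : List Bool) : l.count true + l.count false = l.length := by
  induction l with
  | nil => rfl
  | cons a l ih => cases a <;> simp [List.count_cons] <;> omega

/-- division inequalities -/
lemma le_div_add (x y n : ℕ) : x/n + y/n ≤ (x+y)/n := Nat.add_div_le_add_div x y n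

lemma div_add_le (x y n : ℕ) (hn : 0 < n) : (x+y)/n ≤ x/n + y/n + 1 := by
  obtain ⟨m, rfl⟩ : ∃ m, n = m + 1 := ⟨n-1, by omega⟩
  rw [Nat.div_le_iff_le_mul_add_pred hn]
  have h1 := Nat.div_add_mod x (m+1)
  have h2 := Nat.div_add_mod y (m+1)
  have h3 : x % (m+1) < m+1 := Nat.mod_lt _ hn
  have h4 : y % (m+1) < m+1 := Nat.mod_lt _ hn
  have h5 : (m+1) - 1 = m := rfl
  rw [h5]
  nlinarith [h1, h2, h3, h4]

lemma pc_W (a b : ℕ) : ∀ k, k ≤ a + b → pc (W a b) k = k*b/(a+b) := by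
  intro k hk
  induction k with
  | zero => simp
  | succ k ih =>
    have hk' : k ≤ a + b := by omega
    have hklt : k < (W a b).length := by simpa using hk
    have hn : 0 < a + b := by omega
    rw [pc_succ _ _ hklt, ih hk']
    have hget : (W a b)[k]'hklt = Wl (a+b) b k := getElem_W a b k (by omega)
    rw [hget]
    have hmono : k*b/(a+b) ≤ (k+1)*b/(a+b) :=
      Nat.div_le_div_right (by nlinarith)
    have hstep : (k+1)*b/(a+b) ≤ k*b/(a+b) + 1 := by
      have hb : b ≤ a + b := by omega
      have : (k+1)*b ≤ k*b + (a+b) := by nlinarith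
      calc (k+1)*b/(a+b) ≤ (k*b + (a+b))/(a+b) := Nat.div_le_div_right this
        _ = k*b/(a+b) + 1 := by rw [Nat.add_div_right _ hn]
    unfold Wl
    simp only [decide_eq_true_eq]
    set x := k*b/(a+b) with hx
    set y := (k+1)*b/(a+b) with hy
    by_cases hlt : x < y
    · rw [if_pos hlt]; omega
    · rw [if_neg hlt]; omega

lemma infix_pc (u w : List Bool) (h : u <:+: w) :
    ∃ i, i + u.length ≤ w.length ∧ pc w (i + u.length) = pc w i + u.count true := by
  obtain ⟨s, t, rfl⟩ := h
  refine ⟨s.length, by simp, ?_⟩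
  have h1 : pc (s ++ u ++ t) s.length = s.count true := by
    unfold pc
    rw [show s ++ u ++ t = s ++ (u ++ t) by simp, List.take_append_of_le_length (by simp),
      List.take_of_length_le (le_refl _)]
  have h2 : pc (s ++ u ++ t) (s.length + u.length) = s.count true + u.count true := by
    unfold pc
    rw [show s.length + u.length = (s ++ u).length by simp,
      show s ++ u ++ t = (s ++ u) ++ t by simp,
      List.take_append_of_le_length (le_refl _), List.take_of_length_le (le_refl _),
      List.count_append]
  rw [h1, h2]

lemma balanced_W (a b : ℕ) : BalancedWord (W a b) := by
  intro u v hu hv hlen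
  obtain ⟨i, hiu, hieq⟩ := infix_pc u _ hu
  obtain ⟨j, hjv, hjeq⟩ := infix_pc v _ hv
  rcases Nat.eq_zero_or_pos (a+b) with h0 | hpos
  · have hu0 : u.length = 0 := by
      rw [length_W, h0] at hiu; omega
    simp [List.length_eq_zero_iff.mp hu0]
  rw [length_W] at hiu hjv
  rw [hlen] at hieq hiu
  set k := v.length with hk
  rw [pc_W a b _ hiu, pc_W a b _ (by omega)] at hieq
  rw [pc_W a b _ hjv, pc_W a b _ (by omega)] at hjeq
  have e1 : (i+k)*b = i*b + k*b := by ring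
  have e2 : (j+k)*b = j*b + k*b := by ring
  have h1 : (i+k)*b/(a+b) ≤ i*b/(a+b) + k*b/(a+b) + 1 := by
    rw [e1]; exact div_add_le _ _ _ hpos
  have h2 : j*b/(a+b) + k*b/(a+b) ≤ (j+k)*b/(a+b) := by
    rw [e2]; exact le_div_add _ _ _
  set A := i*b/(a+b); set A2 := (i+k)*b/(a+b); set C := j*b/(a+b)
  set C2 := (j+k)*b/(a+b); set K := k*b/(a+b)
  omega

lemma balanced_reverse {w : List Bool} (h : BalancedWord w) : BalancedWord w.reverse := by
  intro u v hu hv hlen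
  have hu' : u.reverse <:+: w := by
    have := List.reverse_infix.mpr hu
    simpa using this
  have hv' : v.reverse <:+: w := by
    have := List.reverse_infix.mpr hv
    simpa using this
  have := h u.reverse v.reverse hu' hv' (by simpa using hlen)
  simpa using this

lemma div_reflect (n b : ℕ) (hcop : Nat.Coprime b n) :
    ∀ j, 1 ≤ j → j ≤ n - 1 → j*b/n + (n-j)*b/n = b - 1 := by
  intro j hj1 hj2
  have hn : 2 ≤ n := by omega
  have hq := Nat.div_add_mod (j*b) n
  set q := j*b/n with hqdef
  set r := j*b % n with hrdef
  have hrlt : r < n := Nat.mod_lt _ (by omega)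
  have hr0 : r ≠ 0 := by
    intro h0
    have hdvd : n ∣ j * b := ⟨q, by omega⟩
    have hnj : n ∣ j := Nat.Coprime.dvd_of_dvd_mul_right hcop.symm hdvd
    have := Nat.le_of_dvd (by omega) hnj
    omega
  have hb0 : 0 < b := by
    rcases Nat.eq_zero_or_pos b with h | h
    · exfalso; apply hr0; rw [hrdef, h]; simp
    · exact h
  have hqb : q + 1 ≤ b := by
    by_contra hcon
    push_neg at hcon
    have : n*q ≤ j*b := by omega
    have hjb : j*b ≤ (n-1)*b := Nat.mul_le_mul_right _ (by omega)
    have : (n-1)*b + b = n*b := by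
      rw [← Nat.succ_mul]; congr 1; omega
    nlinarith [this, hjb]
  have E2 : (n-j)*b + (n*q + r) = n*b := by
    rw [hq, ← Nat.add_mul]
    congr 1; omega
  have eb : (b - (q+1))*n + (q+1)*n = b*n := by
    rw [← Nat.add_mul]; congr 1; omega
  have eq1 : (q+1)*n = n*q + n := by ring
  have hval : (n-j)*b/n = b - (q+1) := by
    apply Nat.div_eq_of_lt_le
    · set X := (n-j)*b; set P := n*q; set Y := (b-(q+1))*n; set B2 := b*n
      have hbn : n*b = b*n := by ring
      omega
    · have eq2 : (b-(q+1)+1)*n = (b-(q+1))*n + n := by ring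
      set X := (n-j)*b; set P := n*q; set Y := (b-(q+1))*n; set B2 := b*n
      have hbn : n*b = b*n := by ring
      omega
  rw [hval]
  omega

lemma Wl_reflect (n b p : ℕ) (hban : b < n) (hcop : Nat.Coprime b n)
    (hp1 : 1 ≤ p) (hp2 : p ≤ n - 2) : Wl n b (n-1-p) = Wl n b p := by
  have h1 : p*b/n + (n-p)*b/n = b - 1 := div_reflect n b hcop p (by omega) (by omega)
  have h2 : (p+1)*b/n + (n-(p+1))*b/n = b - 1 := div_reflect n b hcop (p+1) (by omega) (by omega)
  have hmono1 : p*b/n ≤ (p+1)*b/n := Nat.div_le_div_right (by nlinarith)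
  have hidx1 : n - 1 - p = n - (p+1) := by omega
  have hidx2 : n - 1 - p + 1 = n - p := by omega
  unfold Wl
  rw [hidx2, hidx1]
  rw [decide_eq_decide]
  set x := p*b/n; set y := (p+1)*b/n; set x2 := (n-(p+1))*b/n; set y2 := (n-p)*b/n
  omega

def core (a b : ℕ) : List Bool := (List.range (a+b-2)).map (fun i => Wl (a+b) b (i+1))

lemma Wl_zero (n b : ℕ) (hb : b < n) : Wl n b 0 = false := by
  unfold Wl
  simp [Nat.div_eq_of_lt hb]

lemma Wl_last (n b : ℕ) (hb : 0 < b) (hban : b < n) (hcop : Nat.Coprime b n) :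
    Wl n b (n-1) = true := by
  have h1 : (n-1)*b/n + (n-(n-1))*b/n = b - 1 := div_reflect n b hcop (n-1) (by omega) (by omega)
  have hnn : n - (n-1) = 1 := by omega
  rw [hnn, one_mul] at h1
  have hb2 : b/n = 0 := Nat.div_eq_of_lt hban
  rw [hb2, add_zero] at h1
  have hlast : (n-1+1) = n := by omega
  unfold Wl
  rw [hlast, Nat.mul_div_cancel_left b (by omega : 0 < n), h1]
  simp
  omega

lemma W_decomp (a b : ℕ) (ha : 0 < a) (hb : 0 < b) (hcop : Nat.Coprime b (a+b)) :
    W a b = false :: (core a b ++ [true]) := by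
  have hn : 2 ≤ a + b := by omega
  have hban : b < a + b := by omega
  apply List.ext_getElem
  · simp [core]; omega
  intro i h1 h2
  rw [getElem_W a b i (by simpa using h1)]
  rcases Nat.eq_zero_or_pos i with h0 | hi
  · subst h0
    simp [Wl_zero _ _ hban]
  obtain ⟨i', rfl⟩ : ∃ i', i = i' + 1 := ⟨i - 1, by omega⟩
  rw [List.getElem_cons_succ]
  have hilen : i' + 1 < a + b := by simpa using h1
  by_cases hco : i' < a + b - 2
  · rw [List.getElem_append_left (by simpa [core] using hco)]
    simp only [core, List.getElem_map, List.getElem_range]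
  · have hieq : i' = a + b - 2 := by
      have : i' + 1 < a + b := hilen
      simp [core] at h2
      omega
    rw [List.getElem_append_right (by simpa [core] using Nat.le_of_eq hieq.symm)]
    rw [List.getElem_singleton]
    rw [show i' + 1 = a + b - 1 by omega]
    exact Wl_last (a+b) b hb hban hcop

lemma core_palindrome (a b : ℕ) (ha : 0 < a) (hb : 0 < b) (hcop : Nat.Coprime b (a+b)) :
    (core a b).reverse = core a b := by
  apply List.ext_getElem
  · simp
  intro i h1 h2
  rw [List.getElem_reverse]
  simp only [core, List.getElem_map, List.getElem_range, List.length_reverse, List.length_map,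
    List.length_range] at h1 h2 ⊢
  have hlen : i < a + b - 2 := h2
  rw [show (a+b-2) - 1 - i + 1 = (a+b) - 1 - (i+1) by omega]
  exact Wl_reflect (a+b) b (i+1) (by omega) hcop (by omega) (by omega)

lemma christoffel_W (a b : ℕ) (hcop : Nat.Coprime a b) (hpos : 0 < a + b) :
    IsLowerChristoffel (W a b) := by
  rcases Nat.eq_zero_or_pos a with ha | ha
  · subst ha
    have hb1 : b = 1 := (Nat.coprime_zero_left b).mp hcop
    subst hb1
    right; left
    decide
  rcases Nat.eq_zero_or_pos b with hb | hb
  · subst hb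
    have ha1 : a = 1 := by
      have := (Nat.coprime_zero_left a).mp hcop.symm
      exact this
    subst ha1
    left
    decide
  have hcop' : Nat.Coprime b (a+b) := by
    rw [Nat.coprime_add_self_right]
    exact hcop.symm
  right; right
  refine ⟨core a b, ⟨core_palindrome a b ha hb hcop', ?_, ?_⟩, (W_decomp a b ha hb hcop')⟩
  · rw [← W_decomp a b ha hb hcop']
    exact balanced_W a b
  · have hrev : (W a b).reverse = true :: (core a b ++ [false]) := by
      rw [W_decomp a b ha hb hcop']
      simp [core_palindrome a b ha hb hcop']
    rw [← hrev]
    exact balanced_reverse (balanced_W a b)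


lemma rep_main (m : List Bool) (hpal : m.reverse = m)
    (hbal : BalancedWord (false :: (m ++ [true]))) :
    Nat.Coprime ((false :: (m ++ [true])).count false) ((false :: (m ++ [true])).count true) ∧
      false :: (m ++ [true]) =
        W ((false :: (m ++ [true])).count false) ((false :: (m ++ [true])).count true) := by
  classical
  set w : List Bool := false :: (m ++ [true]) with hw
  set b : ℕ := w.count true with hbdef
  set a : ℕ := w.count false with hadef
  set n : ℕ := w.length with hndef
  have hnm : n = m.length + 2 := by simp [hndef, hw]
  have hab : b + a = n := count_bool w
  have hn2 : 2 ≤ n := by omega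
  have hpcn : pc w n = b := pc_full w n (le_of_eq hndef.symm)
  have hwrev : w.reverse = true :: (m ++ [false]) := by
    rw [hw]
    simp [hpal]
  have hpc_eq : ∀ s, 1 ≤ s → s ≤ n - 1 → pc w s = (m.take (s-1)).count true := by
    intro s h1 h2
    obtain ⟨s', rfl⟩ : ∃ s', s = s' + 1 := ⟨s - 1, by omega⟩
    unfold pc
    rw [hw]
    rw [List.take_succ_cons, List.take_append_of_le_length (by omega : s' ≤ m.length)]
    simp
  have hsuf : ∀ s, 1 ≤ s → s ≤ n - 1 → (w.drop (n-s)).count true = pc w s + 1 := by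
    intro s h1 h2
    have hrd : (w.drop (n-s)).reverse = w.reverse.take s := by
      rw [List.reverse_drop]
      congr 1
      omega
    have : (w.drop (n-s)).count true = (w.reverse.take s).count true := by
      rw [← hrd, List.count_reverse]
    rw [this, hwrev]
    obtain ⟨s', rfl⟩ : ∃ s', s = s' + 1 := ⟨s - 1, by omega⟩
    rw [List.take_succ_cons, List.take_append_of_le_length (by omega : s' ≤ m.length)]
    rw [hpc_eq (s'+1) h1 h2]
    simp
  have S2 : ∀ s, 1 ≤ s → s ≤ n - 1 → pc w (n-s) + pc w s + 1 = b := by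
    intro s h1 h2
    have hsplit : pc w (n-s) + (w.drop (n-s)).count true = b := by
      rw [hbdef]
      conv_rhs => rw [← List.take_append_drop (n-s) w]
      rw [List.count_append]
      rfl
    rw [hsuf s h1 h2] at hsplit
    omega
  have hdroptake : ∀ i k, pc w (i + k) = pc w i + ((w.drop i).take k).count true := by
    intro i k
    unfold pc
    rw [List.take_add, List.count_append]
  have S4low : ∀ i k, i + k ≤ n → 1 ≤ k → k ≤ n - 1 → pc w i + pc w k ≤ pc w (i+k) := by
    intro i k h hk1 hk2
    have hcnt := hdroptake i k
    have hs := hsuf k hk1 hk2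
    have hb := hbal (w.drop (n-k)) ((w.drop i).take k)
      ((List.drop_suffix _ _).isInfix)
      (((List.take_prefix _ _).isInfix).trans ((List.drop_suffix _ _).isInfix))
      (by simp [hndef.symm]; omega)
    omega
  have S4up : ∀ i k, i + k ≤ n → pc w (i+k) ≤ pc w i + pc w k + 1 := by
    intro i k h
    have hcnt := hdroptake i k
    have hb := hbal ((w.drop i).take k) (w.take k)
      (((List.take_prefix _ _).isInfix).trans ((List.drop_suffix _ _).isInfix))
      ((List.take_prefix _ _).isInfix)
      (by simp [hndef.symm]; omega)
    have : (w.take k).count true = pc w k := rfl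
    omega
  have KEY : ∀ k, 1 ≤ k → k ≤ n - 1 → n * pc w k + 1 ≤ k * b := by
    intro k hk1 hk2
    set f : ℕ → ℕ := fun i => if i + k ≤ n then pc w (i+k) else b + pc w (i + k - n) with hf
    set g : ℕ → ℕ := fun i => pc w i + pc w k + (if i = n - k then 1 else 0) with hg
    have hpoint : ∀ i ∈ Finset.range n, g i ≤ f i := by
      intro i hi
      rw [Finset.mem_range] at hi
      simp only [hf, hg]
      by_cases hik : i + k ≤ n
      · rw [if_pos hik]
        by_cases hieq : i = n - k
        · subst hieq
          rw [if_pos rfl, show n - k + k = n by omega, hpcn]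
          have h3 := S2 k hk1 hk2
          omega
        · rw [if_neg hieq]
          have := S4low i k hik hk1 hk2
          omega
      · rw [if_neg hik, if_neg (by omega : ¬ i = n - k)]
        have h3 := S2 (n - i) (by omega) (by omega)
        rw [show n - (n - i) = i by omega] at h3
        have h4 := S4up (n-i) (i + k - n) (by omega)
        rw [show (n-i) + (i+k-n) = k by omega] at h4
        omega
    have hsum := Finset.sum_le_sum hpoint
    have hgsum : ∑ i ∈ Finset.range n, g i
        = (∑ i ∈ Finset.range n, pc w i) + n * pc w k + 1 := by
      simp only [hg]
      rw [Finset.sum_add_distrib, Finset.sum_add_distrib, Finset.sum_const, Finset.card_range,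
        Finset.sum_ite_eq' (Finset.range n) (n-k) (fun _ => 1)]
      rw [if_pos (by rw [Finset.mem_range]; omega)]
      rw [smul_eq_mul]
    have hfsum : ∑ i ∈ Finset.range n, f i
        = (∑ i ∈ Finset.range (n-k+1), pc w (k+i)) + ((k-1)*b + ∑ i ∈ Finset.range (k-1), pc w (i+1)) := by
      rw [show (Finset.range n) = Finset.range ((n-k+1)+(k-1)) by congr 1; omega]
      rw [Finset.sum_range_add]
      congr 1
      · apply Finset.sum_congr rfl
        intro i hi
        rw [Finset.mem_range] at hi
        simp only [hf]
        rw [if_pos (by omega), show i + k = k + i by omega]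
      · have : ∀ i ∈ Finset.range (k-1), f ((n-k+1) + i) = b + pc w (i+1) := by
          intro i hi
          rw [Finset.mem_range] at hi
          simp only [hf]
          rw [if_neg (by omega), show (n-k+1+i) + k - n = i + 1 by omega]
        rw [Finset.sum_congr rfl this, Finset.sum_add_distrib, Finset.sum_const,
          Finset.card_range, smul_eq_mul]
    have ID1 : ∑ i ∈ Finset.range n, pc w (i+1)
        = (∑ i ∈ Finset.range (k-1), pc w (i+1)) + (∑ i ∈ Finset.range (n-k+1), pc w (k+i)) := by
      rw [show (Finset.range n) = Finset.range ((k-1)+(n-k+1)) by congr 1; omega]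
      rw [Finset.sum_range_add]
      congr 1
      apply Finset.sum_congr rfl
      intro i hi
      rw [show (k-1) + i + 1 = k + i by omega]
    have ID2 : ∑ i ∈ Finset.range n, pc w (i+1)
        = (∑ i ∈ Finset.range n, pc w i) + b := by
      have e1 := Finset.sum_range_succ (pc w) n
      have e2 := Finset.sum_range_succ' (pc w) n
      rw [e1] at e2
      rw [hpcn] at e2
      simp only [pc_zero, add_zero] at e2
      omega
    rw [hgsum, hfsum] at hsum
    have hkb : (k-1)*b + b = k*b := by
      rw [← Nat.succ_mul]
      congr 1
      omega
    omega
  have BND : ∀ k, 1 ≤ k → k ≤ n - 1 →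
      n * pc w k + 1 ≤ k * b ∧ k * b + 1 ≤ n * pc w k + n := by
    intro k hk1 hk2
    have h1 := KEY k hk1 hk2
    have h2 := KEY (n-k) (by omega) (by omega)
    have h3 := S2 k hk1 hk2
    have h4 : n * pc w (n-k) + n * pc w k + n = n * b := by
      rw [← h3]
      ring
    have h5 : k*b + (n-k)*b = n*b := by
      rw [← Nat.add_mul]
      congr 1
      omega
    omega
  have pc_div : ∀ k, k ≤ n → pc w k = k * b / n := by
    intro k hk
    rcases Nat.eq_zero_or_pos k with rfl | hk1
    · simp
    rcases Nat.lt_or_ge k n with hkn | hkn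
    · have hb := BND k hk1 (by omega)
      have hcomm : pc w k * n = n * pc w k := by ring
      refine (Nat.div_eq_of_lt_le (by omega) ?_).symm
      have hexp : (pc w k + 1) * n = n * pc w k + n := by ring
      omega
    · have hkeq : k = n := by omega
      subst hkeq
      rw [hpcn, Nat.mul_comm, Nat.mul_div_cancel _ (by omega : 0 < n)]
  have hcopnb : Nat.gcd n b = 1 := by
    by_contra hg1
    have hgdvdn : Nat.gcd n b ∣ n := Nat.gcd_dvd_left _ _
    have hgb : Nat.gcd n b ∣ b := Nat.gcd_dvd_right _ _
    have hgpos : 0 < Nat.gcd n b := Nat.gcd_pos_of_pos_left _ (by omega)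
    have hg2 : 2 ≤ Nat.gcd n b := by
      rcases Nat.lt_or_ge (Nat.gcd n b) 2 with h | h
      · interval_cases h : Nat.gcd n b
        all_goals omega
      · exact h
    set g := Nat.gcd n b with hgdef
    set k := n / g with hkdef
    have hk1 : 1 ≤ k := Nat.div_pos (Nat.le_of_dvd (by omega) hgdvdn) hgpos
    have hkn : k ≤ n - 1 := by
      have h2 : n / g ≤ n / 2 := Nat.div_le_div_left hg2 (by omega)
      have h3 : n / 2 ≤ n - 1 := by omega
      omega
    have hkb : k * b = n * (b / g) := by
      obtain ⟨n', hn'⟩ := hgdvdn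
      obtain ⟨b', hb'⟩ := hgb
      rw [hkdef, hn', hb', Nat.mul_div_cancel_left n' (by omega : 0 < g),
        Nat.mul_div_cancel_left b' (by omega : 0 < g)]
      ring
    have hb := BND k hk1 hkn
    rw [hkb] at hb
    have hlt1 : n * pc w k < n * (b / g) := by omega
    have hlt2 : n * (b / g) < n * (pc w k + 1) := by
      have : n * (pc w k + 1) = n * pc w k + n := by ring
      omega
    have := Nat.lt_of_mul_lt_mul_left hlt1
    have := Nat.lt_of_mul_lt_mul_left hlt2
    omega
  constructor
  · have : Nat.Coprime (a + b) b := by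
      rw [show a + b = n by omega]
      exact hcopnb
    exact (Nat.coprime_add_self_left).mp this
  · have hlen : w.length = (W a b).length := by
      rw [length_W, ← hndef]
      omega
    apply List.ext_getElem hlen
    intro i h1 h2
    have hilt : i < n := by omega
    rw [getElem_W a b i (by omega)]
    have hstep := pc_succ w i (by omega)
    have hdivi : pc w i = i*b/n := pc_div i (by omega)
    have hdivi1 : pc w (i+1) = (i+1)*b/n := pc_div (i+1) (by omega)
    have hnab : a + b = n := by omega
    unfold Wl
    rw [hnab]
    have hmono : i*b/n ≤ (i+1)*b/n := Nat.div_le_div_right (by nlinarith)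
    cases hwi : w[i]'(by omega) with
    | false =>
      rw [hwi] at hstep
      simp at hstep
      have heq : i*b/n = (i+1)*b/n := by omega
      simp [heq]
    | true =>
      rw [hwi] at hstep
      simp at hstep
      have heq : (i+1)*b/n = i*b/n + 1 := by omega
      simp [heq]

lemma rep_of_christoffel (w : List Bool) (hw : IsLowerChristoffel w) :
    Nat.Coprime (w.count false) (w.count true) ∧ w = W (w.count false) (w.count true) := by
  rcases hw with h | h | ⟨m, ⟨hpal, hbal, _⟩, h⟩
  · subst h; exact ⟨by decide, by decide⟩
  · subst h; exact ⟨by decide, by decide⟩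
  · subst h
    exact rep_main m hpal hbal

lemma exists_inv (b n : ℕ) (hcop : Nat.Coprime b n) (hn : 0 < n) :
    ∃ k, 1 ≤ k ∧ k ≤ n ∧ k * b % n = n - 1 := by
  rcases Nat.lt_or_ge n 2 with h2 | h2
  · refine ⟨1, le_refl 1, by omega, ?_⟩
    have hn1 : n = 1 := by omega
    subst hn1
    simp [Nat.mod_one]
  · haveI : NeZero n := ⟨by omega⟩
    set u := ZMod.unitOfCoprime b hcop with hu
    set x : ZMod n := ((-(u⁻¹) : (ZMod n)ˣ) : ZMod n) with hx
    have hxb : x * (b : ZMod n) = -1 := by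
      rw [hx, ← ZMod.coe_unitOfCoprime b hcop, ← hu]
      rw [Units.val_neg]
      rw [neg_mul]
      rw [← Units.val_mul]
      rw [inv_mul_cancel]
      simp
    have hmod : x.val * b % n = n - 1 := by
      have hcast : ((x.val * b : ℕ) : ZMod n) = -1 := by
        push_cast
        rw [ZMod.natCast_val, ZMod.cast_id]
        exact hxb
      have h1 : (x.val * b) % n = ZMod.val ((x.val * b : ℕ) : ZMod n) := by
        rw [ZMod.val_natCast]
      rw [h1, hcast]
      obtain ⟨t, rfl⟩ : ∃ t, n = t + 1 := ⟨n - 1, by omega⟩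
      rw [ZMod.val_neg_one]
      omega
    refine ⟨x.val, ?_, le_of_lt (ZMod.val_lt x), hmod⟩
    rcases Nat.eq_zero_or_pos x.val with h0 | h1
    · exfalso
      rw [h0] at hmod
      simp at hmod
      omega
    · exact h1

lemma NL (a b c d : ℕ) (hab : Nat.Coprime a b) (hcd : Nat.Coprime c d)
    (hAB : Nat.Coprime (a+c) (b+d)) (h1 : 1 ≤ a+b) (h2 : 1 ≤ c+d)
    (H1 : ∀ k, k ≤ a+b → k*(b+d)/(a+b+(c+d)) = k*b/(a+b))
    (H2 : ∀ j, j ≤ c+d → ((a+b)+j)*(b+d)/(a+b+(c+d)) = b + j*d/(c+d)) :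
    (a+b)*(b+d) = b*(a+b+(c+d)) + 1 := by
  set n1 := a + b with hn1
  set n2 := c + d with hn2
  set N := n1 + n2 with hN
  set B := b + d with hB
  have hNpos : 0 < N := by omega
  have hbn1 : Nat.Coprime b n1 := by
    rw [hn1, Nat.coprime_add_self_right]
    exact hab.symm
  have hdn2 : Nat.Coprime d n2 := by
    rw [hn2, Nat.coprime_add_self_right]
    exact hcd.symm
  have hBN : Nat.Coprime B N := by
    have h := (Nat.coprime_add_self_right (m := B) (n := a+c)).mpr hAB.symm
    rwa [show (a+c) + B = N by omega] at h
  -- step A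
  have hA : n1 * B / N = b := by
    have := H1 n1 (le_refl _)
    rwa [Nat.mul_div_cancel_left b (by omega : 0 < n1)] at this
  have hbound1 : b * N ≤ n1 * B := by
    have := Nat.div_mul_le_self (n1*B) N
    rw [hA] at this
    exact this
  have hbound2 : n1 * B < b * N + N := by
    have h := (Nat.div_lt_iff_lt_mul hNpos).mp (by rw [hA]; omega : n1*B/N < b + 1)
    have : (b+1)*N = b*N + N := by ring
    omega
  set D := n1*B - b*N with hD
  have hD1 : b*N + D = n1*B := by omega
  have hDltN : D < N := by omega
  have hDpos : 0 < D := by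
    rcases Nat.eq_zero_or_pos D with h0 | h
    · exfalso
      have heq : n1 * B = N * b := by
        have hcomm : b * N = N * b := by ring
        omega
      have hdvd : N ∣ n1 * B := ⟨b, heq⟩
      have hNd : N ∣ n1 := Nat.Coprime.dvd_of_dvd_mul_right hBN.symm hdvd
      have := Nat.le_of_dvd (by omega) hNd
      omega
    · exact h
  have hId : n1*d = n2*b + D := by
    have e := hD1
    rw [hN, hB] at e
    have e2 : b*(n1+n2) = b*n1 + b*n2 := by ring
    have e3 : n1*(b+d) = n1*b + n1*d := by ring
    have e4 : b*n1 = n1*b := by ring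
    have e5 : b*n2 = n2*b := by ring
    omega
  -- k* side
  obtain ⟨k, hk1, hkn, hkmod⟩ := exists_inv b n1 hbn1 (by omega)
  have hkdiv := Nat.div_add_mod (k*b) n1
  set q := k*b/n1 with hq
  have he1 : k*b = n1*q + (n1 - 1) := by omega
  have hH1k := H1 k hkn
  have hup : k*B < (q+1)*N := by
    have h := (Nat.div_lt_iff_lt_mul hNpos).mp (by rw [hH1k]; omega : k*B/N < q + 1)
    exact h
  have he3 : k*B*n1 = k*b*N + k*D := by
    calc k*B*n1 = k*(n1*B) := by ring
    _ = k*(b*N + D) := by rw [hD1]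
    _ = k*b*N + k*D := by ring
  have hkDN : k*D < N := by
    have hmul : k*B*n1 < ((q+1)*N)*n1 := by
      exact Nat.mul_lt_mul_of_lt_of_le hup (le_refl n1) (by omega)
    have he1' : k*b*N = (n1*q)*N + (n1-1)*N := by rw [he1]; ring
    have hsub : (n1-1)*N + N = n1*N := by
      rw [← Nat.succ_mul]; congr 1; omega
    have hexp : ((q+1)*N)*n1 = (n1*q)*N + n1*N := by ring
    omega
  have hdvd1 : k*b + 1 = n1*(q+1) := by
    have : n1*(q+1) = n1*q + n1 := by ring
    omega
  have hE : n1*(k*d) + n2 = n1*(n2*(q+1)) + k*D := by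
    have e1 : n1*(k*d) = k*(n2*b) + k*D := by
      calc n1*(k*d) = k*(n1*d) := by ring
      _ = k*(n2*b + D) := by rw [hId]
      _ = k*(n2*b) + k*D := by ring
    have e2 : k*(n2*b) + n2 = n1*(n2*(q+1)) := by
      calc k*(n2*b) + n2 = n2*(k*b + 1) := by ring
      _ = n2*(n1*(q+1)) := by rw [hdvd1]
      _ = n1*(n2*(q+1)) := by ring
    omega
  have hkD1 : 1 ≤ k*D := Nat.mul_pos (by omega) (by omega)
  have hkDn2 : k*D ≤ n2 := by
    by_contra hcon
    push_neg at hcon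
    have hdd : n1 ∣ (k*D - n2) := by
      have heq : k*D - n2 = n1*(k*d) - n1*(n2*(q+1)) := by omega
      rw [heq]
      exact Nat.dvd_sub ⟨k*d, rfl⟩ ⟨n2*(q+1), rfl⟩
    have := Nat.le_of_dvd (by omega) hdd
    omega
  have hkDdvd : n1 ∣ (n2 - k*D) := by
    have heq : n2 - k*D = n1*(n2*(q+1)) - n1*(k*d) := by omega
    rw [heq]
    exact Nat.dvd_sub ⟨n2*(q+1), rfl⟩ ⟨k*d, rfl⟩
  -- j side
  obtain ⟨j, hj1, hjn, hjmod⟩ := exists_inv d n2 hdn2 (by omega)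
  have hjdiv := Nat.div_add_mod (j*d) n2
  set q2 := j*d/n2 with hq2
  have he2 : j*d = n2*q2 + (n2 - 1) := by omega
  have hH2j := H2 j hjn
  have hup2 : (n1+j)*B < (b+q2+1)*N := by
    have h := (Nat.div_lt_iff_lt_mul hNpos).mp (by rw [hH2j]; omega : (n1+j)*B/N < b + q2 + 1)
    exact h
  have hn2B : n2*B + D = N*d := by
    have e1 : n2*B = n2*b + n2*d := by rw [hB]; ring
    have e2 : N*d = n1*d + n2*d := by rw [hN]; ring
    omega
  set q' := n2 - j with hq'def
  have hq'j : j + q' = n2 := by omega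
  have he4 : (n1+j)*B*n2 + j*D = b*n2*N + j*d*N + n2*D := by
    have e1 : (n1+j)*B*n2 + j*D = (n1*B)*n2 + j*(n2*B + D) := by ring
    rw [hn2B, ← hD1] at e1
    rw [e1]
    ring
  have hq'D : q'*D < N := by
    have hmul2 : (n1+j)*B*n2 < ((b+q2+1)*N)*n2 :=
      Nat.mul_lt_mul_of_lt_of_le hup2 (le_refl n2) (by omega)
    have he2' : j*d*N = (n2*q2)*N + (n2-1)*N := by rw [he2]; ring
    have hsub2 : (n2-1)*N + N = n2*N := by
      rw [← Nat.succ_mul]; congr 1; omega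
    have hexp3 : ((b+q2+1)*N)*n2 = b*n2*N + (n2*q2)*N + n2*N := by ring
    have hqq : j*D + q'*D = n2*D := by rw [← Nat.add_mul, hq'j]
    omega
  have hdvd2 : j*d + 1 = n2*(q2+1) := by
    have : n2*(q2+1) = n2*q2 + n2 := by ring
    omega
  have hs'eq : q'*d + n2*(q2+1) = n2*d + 1 := by
    have e1 : j*d + q'*d = n2*d := by rw [← Nat.add_mul, hq'j]
    omega
  have hE2 : q'*D + n2*(q'*b) + n1*(n2*(q2+1)) = n1*(n2*d) + n1 := by
    have e1 : q'*(n1*d) = n2*(q'*b) + q'*D := by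
      calc q'*(n1*d) = q'*(n2*b + D) := by rw [hId]
      _ = n2*(q'*b) + q'*D := by ring
    have e2 : q'*(n1*d) + n1*(n2*(q2+1)) = n1*(n2*d) + n1 := by
      calc q'*(n1*d) + n1*(n2*(q2+1)) = n1*(q'*d + n2*(q2+1)) := by ring
      _ = n1*(n2*d + 1) := by rw [hs'eq]
      _ = n1*(n2*d) + n1 := by ring
    omega
  have c1 : n1*(n2*d) = n2*(n1*d) := by ring
  have c2 : n1*(n2*(q2+1)) = n2*(n1*(q2+1)) := by ring
  have hq'Dn1 : q'*D ≤ n1 := by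
    by_contra hcon
    push_neg at hcon
    have heq : q'*D - n1 = n2*(n1*d) - (n2*(q'*b) + n2*(n1*(q2+1))) := by omega
    have hdd : n2 ∣ (q'*D - n1) := by
      rw [heq]
      exact Nat.dvd_sub ⟨n1*d, rfl⟩ (dvd_add ⟨q'*b, rfl⟩ ⟨n1*(q2+1), rfl⟩)
    have := Nat.le_of_dvd (by omega) hdd
    omega
  have hq'Ddvd : n2 ∣ (n1 - q'*D) := by
    have heq : n1 - q'*D = (n2*(q'*b) + n2*(n1*(q2+1))) - n2*(n1*d) := by omega
    rw [heq]
    exact Nat.dvd_sub (dvd_add ⟨q'*b, rfl⟩ ⟨n1*(q2+1), rfl⟩) ⟨n1*d, rfl⟩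
  -- branch on k*D vs n2
  rcases Nat.lt_or_ge (k*D) n2 with hlt | hge
  · -- k*D < n2 : then n1 < n2 and q'*D = n1, D ∣ b, D = 1
    have hn1n2 : n1 < n2 := by
      have := Nat.le_of_dvd (by omega) hkDdvd
      omega
    have hq'Deq : q'*D = n1 := by
      by_contra hne
      have hlt2 : q'*D < n1 := by omega
      have := Nat.le_of_dvd (by omega) hq'Ddvd
      omega
    have hfin : D*(q'*d) = n2*b + D := by
      calc D*(q'*d) = (q'*D)*d := by ring
      _ = n1*d := by rw [hq'Deq]
      _ = n2*b + D := hId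
    have hs'D : D*(q'*d) + D*(n2*(q2+1)) = D*(n2*d) + D := by
      calc D*(q'*d) + D*(n2*(q2+1)) = D*(q'*d + n2*(q2+1)) := by ring
      _ = D*(n2*d + 1) := by rw [hs'eq]
      _ = D*(n2*d) + D := by ring
    have d1 : D*(n2*(q2+1)) = n2*(D*(q2+1)) := by ring
    have d2 : D*(n2*d) = n2*(D*d) := by ring
    have hcancel : n2*b + n2*(D*(q2+1)) = n2*(D*d) := by omega
    have hexp4 : n2*(b + D*(q2+1)) = n2*b + n2*(D*(q2+1)) := by ring
    have hbeq : b + D*(q2+1) = D*d := by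
      apply Nat.eq_of_mul_eq_mul_left (by omega : 0 < n2)
      omega
    have hDb : D ∣ b := by
      have hsub : b = D*d - D*(q2+1) := by omega
      rw [hsub]
      exact Nat.dvd_sub ⟨d, rfl⟩ ⟨q2+1, rfl⟩
    have hDn1' : D ∣ n1 := ⟨q', by rw [← hq'Deq]; ring⟩
    have hgd : D ∣ Nat.gcd b n1 := Nat.dvd_gcd hDb hDn1'
    have hgcd1 : Nat.gcd b n1 = 1 := hbn1
    rw [hgcd1] at hgd
    have hDone : D = 1 := Nat.dvd_one.mp hgd
    omega
  · -- k*D = n2 : D ∣ d, D = 1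
    have hkDeq : k*D = n2 := le_antisymm hkDn2 hge
    have hnd : n1*d = n1*(D*(q+1)) := by
      calc n1*d = n2*b + D := hId
      _ = (k*D)*b + D := by rw [hkDeq]
      _ = D*(k*b + 1) := by ring
      _ = D*(n1*(q+1)) := by rw [hdvd1]
      _ = n1*(D*(q+1)) := by ring
    have hd : d = D*(q+1) := Nat.eq_of_mul_eq_mul_left (by omega : 0 < n1) hnd
    have hDd : D ∣ d := ⟨q+1, hd⟩
    have hDn2' : D ∣ n2 := ⟨k, by rw [← hkDeq]; ring⟩
    have hgd : D ∣ Nat.gcd d n2 := Nat.dvd_gcd hDd hDn2'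
    have hgcd1 : Nat.gcd d n2 = 1 := hdn2
    rw [hgcd1] at hgd
    have hDone : D = 1 := Nat.dvd_one.mp hgd
    omega

lemma CL (x1 y1 x2 y2 : ℕ) (hdet : (x1+y1)*y2 = (x2+y2)*y1 + 1) :
    W x1 y1 ++ W x2 y2 = W (x1+x2) (y1+y2) := by
  set n1 := x1 + y1 with hn1
  set n2 := x2 + y2 with hn2
  have hn1pos : 0 < n1 := by
    rcases Nat.eq_zero_or_pos n1 with h0 | h
    · rw [h0, zero_mul] at hdet
      omega
    · exact h
  have hn2pos : 0 < n2 := by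
    rcases Nat.eq_zero_or_pos n2 with h0 | h
    · have hy2 : y2 = 0 := by omega
      rw [hy2, mul_zero] at hdet
      omega
    · exact h
  have hNpos : 0 < n1 + n2 := by omega
  have hkey1 : n1*(y1+y2) = y1*(n1+n2) + 1 := by
    have e1 : n1*(y1+y2) = n1*y1 + n1*y2 := by ring
    have e2 : y1*(n1+n2) = n1*y1 + n2*y1 := by ring
    omega
  have hkey2 : n2*(y1+y2) + 1 = (n1+n2)*y2 := by
    have e1 : n2*(y1+y2) = n2*y1 + n2*y2 := by ring
    have e2 : (n1+n2)*y2 = n1*y2 + n2*y2 := by ring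
    omega
  have PF1 : ∀ k, k ≤ n1 → k*(y1+y2)/(n1+n2) = k*y1/n1 := by
    intro k hk
    have step1 : k*(y1+y2)/(n1+n2) = (n1*(k*(y1+y2)))/(n1*(n1+n2)) :=
      (Nat.mul_div_mul_left _ _ hn1pos).symm
    have step2 : n1*(k*(y1+y2)) = (n1+n2)*(k*y1) + k := by
      calc n1*(k*(y1+y2)) = k*(n1*(y1+y2)) := by ring
      _ = k*(y1*(n1+n2)+1) := by rw [hkey1]
      _ = (n1+n2)*(k*y1) + k := by ring
    have step3 : n1*(n1+n2) = (n1+n2)*n1 := by ring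
    rw [step1, step2, step3, ← Nat.div_div_eq_div_mul,
      Nat.mul_add_div hNpos, Nat.div_eq_of_lt (by omega : k < n1 + n2), add_zero]
  have PF2 : ∀ j, j ≤ n2 → (n1+j)*(y1+y2)/(n1+n2) = y1 + j*y2/n2 := by
    intro j hj
    have hdm := Nat.div_add_mod (j*y2) n2
    set q := j*y2/n2 with hqdef
    have hr : j*y2 % n2 < n2 := Nat.mod_lt _ (by omega)
    have step2 : n2*((n1+j)*(y1+y2)) + (n1+j) = (n1+n2)*((n1+j)*y2) := by
      calc n2*((n1+j)*(y1+y2)) + (n1+j) = (n1+j)*(n2*(y1+y2) + 1) := by ring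
      _ = (n1+j)*((n1+n2)*y2) := by rw [hkey2]
      _ = (n1+n2)*((n1+j)*y2) := by ring
    have hexpR : (n1+n2)*((n1+j)*y2) = (n1+n2)*(n1*y2) + (n1+n2)*(j*y2) := by ring
    have hlift : (n1+n2)*(n1*y2) = (n1+n2)*(n2*y1) + (n1+n2) := by
      have hdet' : n1*y2 = n2*y1 + 1 := hdet
      rw [hdet']; ring
    apply Nat.div_eq_of_lt_le
    · -- (y1+q)*(n1+n2) ≤ (n1+j)*(y1+y2)
      have hm1 : (n1+n2)*(n2*q) ≤ (n1+n2)*(j*y2) :=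
        Nat.mul_le_mul_left _ (by omega)
      have hgoal : n2*((y1+q)*(n1+n2)) ≤ n2*((n1+j)*(y1+y2)) := by
        have hexpL : n2*((y1+q)*(n1+n2)) = (n1+n2)*(n2*y1) + (n1+n2)*(n2*q) := by ring
        omega
      have := Nat.le_of_mul_le_mul_left hgoal (by omega : 0 < n2)
      omega
    · -- (n1+j)*(y1+y2) < (y1+q+1)*(n1+n2)
      have hm2 : (n1+n2)*(j*y2 + 1) ≤ (n1+n2)*(n2*q + n2) :=
        Nat.mul_le_mul_left _ (by omega)
      have hexpm2a : (n1+n2)*(j*y2 + 1) = (n1+n2)*(j*y2) + (n1+n2) := by ring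
      have hexpm2b : (n1+n2)*(n2*q + n2) = (n1+n2)*(n2*q) + (n1+n2)*n2 := by ring
      have hgoal : n2*((n1+j)*(y1+y2)) < n2*((y1+q+1)*(n1+n2)) := by
        have hexpL2 : n2*((y1+q+1)*(n1+n2))
            = (n1+n2)*(n2*y1) + (n1+n2)*(n2*q) + (n1+n2)*n2 := by ring
        omega
      have h := Nat.lt_of_mul_lt_mul_left hgoal
      have hexpfin : (y1 + q + 1)*(n1+n2) = (y1+q+1)*(n1+n2) := rfl
      omega
  have hlen : (W x1 y1 ++ W x2 y2).length = (W (x1+x2) (y1+y2)).length := by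
    simp [length_W]
    omega
  apply List.ext_getElem hlen
  intro i h1 h2
  have hiN : i < n1 + n2 := by
    simp [length_W] at h1
    omega
  have harg : (x1+x2) + (y1+y2) = n1 + n2 := by omega
  by_cases hi : i < n1
  · rw [List.getElem_append_left (by simp [length_W]; omega : i < (W x1 y1).length)]
    rw [getElem_W x1 y1 i hi, getElem_W (x1+x2) (y1+y2) i (by omega)]
    unfold Wl
    rw [harg, decide_eq_decide]
    rw [PF1 i (by omega), PF1 (i+1) (by omega)]
  · push_neg at hi
    rw [List.getElem_append_right (by simp [length_W]; omega : (W x1 y1).length ≤ i)]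
    have hidx : i - (W x1 y1).length = i - n1 := by simp [length_W, hn1]
    set j := i - n1 with hjdef
    have hjn2 : j < n2 := by omega
    have hgetl : (W x2 y2)[i - (W x1 y1).length]'(by simp [length_W]; omega)
        = Wl n2 y2 j := by
      have : i - (W x1 y1).length = j := by simp [length_W, hjdef, hn1]
      simp only [this]
      exact getElem_W x2 y2 j hjn2
    rw [hgetl, getElem_W (x1+x2) (y1+y2) i (by omega)]
    unfold Wl
    rw [harg, decide_eq_decide]
    rw [show i = n1 + j by omega, show n1 + j + 1 = n1 + (j+1) by omega]
    rw [PF2 j (by omega), PF2 (j+1) (by omega)]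
    omega

lemma pos_len {w : List Bool} (h : IsLowerChristoffel w) : 0 < w.length := by
  rcases h with rfl | rfl | ⟨m, _, rfl⟩ <;> simp

end ChristoffelAux

open ChristoffelAux

/-- If `u`, `v`, `uv` are lower Christoffel words, then so are `u²v` and `uv²`. -/
theorem christoffel_uuv_uvv (u v : List Bool)
    (hu : IsLowerChristoffel u) (hv : IsLowerChristoffel v)
    (huv : IsLowerChristoffel (u ++ v)) :
    IsLowerChristoffel (u ++ u ++ v) ∧ IsLowerChristoffel (u ++ (v ++ v)) := by
  classical
  obtain ⟨hcu, hue⟩ := rep_of_christoffel u hu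
  obtain ⟨hcv, hve⟩ := rep_of_christoffel v hv
  obtain ⟨hcuv, huve⟩ := rep_of_christoffel (u++v) huv
  set a := u.count false with ha
  set b := u.count true with hb
  set c := v.count false with hc
  set d := v.count true with hd
  have hA : (u++v).count false = a + c := by rw [List.count_append]
  have hB : (u++v).count true = b + d := by rw [List.count_append]
  rw [hA, hB] at hcuv huve
  have hlu : u.length = a + b := by
    conv_lhs => rw [hue]
    rw [length_W]
  have hlv : v.length = c + d := by
    conv_lhs => rw [hve]
    rw [length_W]
  have h1 : 1 ≤ a + b := by
    have := pos_len hu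
    omega
  have h2 : 1 ≤ c + d := by
    have := pos_len hv
    omega
  have H1 : ∀ k, k ≤ a+b → k*(b+d)/(a+b+(c+d)) = k*b/(a+b) := by
    intro k hk
    have e1 : pc (u++v) k = pc u k := by
      unfold pc
      rw [List.take_append_of_le_length (by omega : k ≤ u.length)]
    have e2 : pc u k = k*b/(a+b) := by
      conv_lhs => rw [hue]
      exact pc_W a b k hk
    have e3 : pc (u++v) k = k*(b+d)/((a+c)+(b+d)) := by
      conv_lhs => rw [huve]
      exact pc_W (a+c) (b+d) k (by omega)
    rw [show a+b+(c+d) = (a+c)+(b+d) by omega]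
    omega
  have H2 : ∀ j, j ≤ c+d → ((a+b)+j)*(b+d)/(a+b+(c+d)) = b + j*d/(c+d) := by
    intro j hj
    have e1 : pc (u++v) (a+b+j) = b + pc v j := by
      unfold pc
      rw [show a+b+j = u.length + j by omega, List.take_append, List.count_append]
      rw [List.take_of_length_le (by omega), Nat.add_sub_cancel_left, ← hb]
    have e2 : pc v j = j*d/(c+d) := by
      conv_lhs => rw [hve]
      exact pc_W c d j hj
    have e3 : pc (u++v) (a+b+j) = ((a+b)+j)*(b+d)/((a+c)+(b+d)) := by
      conv_lhs => rw [huve]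
      exact pc_W (a+c) (b+d) (a+b+j) (by omega)
    rw [show a+b+(c+d) = (a+c)+(b+d) by omega]
    omega
  have hdet := NL a b c d hcu hcv hcuv h1 h2 H1 H2
  constructor
  · have hdet1 : (a+b)*(b+d) = ((a+c)+(b+d))*b + 1 := by
      have E2 : ((a+c)+(b+d))*b = b*(a+b+(c+d)) := by ring
      omega
    have hcl := CL a b (a+c) (b+d) hdet1
    have heq : u ++ u ++ v = W (a+(a+c)) (b+(b+d)) := by
      rw [List.append_assoc]
      conv_lhs => rw [huve, hue]
      exact hcl
    rw [heq]
    apply christoffel_W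
    · have hMeq : (a+b)*(b+(b+d)) = b*((a+(a+c)) + (b+(b+d))) + 1 := by
        have E1 : (a+b)*(b+(b+d)) = (a+b)*b + (a+b)*(b+d) := by ring
        have E2 : b*((a+(a+c)) + (b+(b+d))) = (a+b)*b + b*(a+b+(c+d)) := by ring
        omega
      have g1 : Nat.gcd (a+(a+c)) (b+(b+d)) ∣ (b+(b+d)) := Nat.gcd_dvd_right _ _
      have g2 : Nat.gcd (a+(a+c)) (b+(b+d)) ∣ (a+(a+c)) + (b+(b+d)) :=
        dvd_add (Nat.gcd_dvd_left _ _) g1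
      have g3 : Nat.gcd (a+(a+c)) (b+(b+d)) ∣ (a+b)*(b+(b+d)) := g1.mul_left _
      have g4 : Nat.gcd (a+(a+c)) (b+(b+d)) ∣ b*((a+(a+c)) + (b+(b+d))) := g2.mul_left _
      rw [hMeq] at g3
      exact Nat.dvd_one.mp ((Nat.dvd_add_right g4).mp g3)
    · omega
  · have hdet2 : ((a+c)+(b+d))*d = (c+d)*(b+d) + 1 := by
      have X1 : (a+b)*(b+d) = (a+b)*b + (a+b)*d := by ring
      have X2 : b*(a+b+(c+d)) = (a+b)*b + b*(c+d) := by ring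
      have X3 : ((a+c)+(b+d))*d = (a+b)*d + (c+d)*d := by ring
      have X4 : (c+d)*(b+d) = b*(c+d) + (c+d)*d := by ring
      omega
    have hcl2 := CL (a+c) (b+d) c d hdet2
    have heq2 : u ++ (v ++ v) = W ((a+c)+c) ((b+d)+d) := by
      rw [← List.append_assoc]
      conv_lhs => rw [huve, hve]
      exact hcl2
    rw [heq2]
    apply christoffel_W
    · have hMeq2 : ((a+c)+(b+d))*((b+d)+d)
          = (b+d)*(((a+c)+c) + ((b+d)+d)) + 1 := by
        have Y1 : ((a+c)+(b+d))*((b+d)+d)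
            = ((a+c)+(b+d))*(b+d) + ((a+c)+(b+d))*d := by ring
        have Y2 : (b+d)*(((a+c)+c) + ((b+d)+d))
            = ((a+c)+(b+d))*(b+d) + (c+d)*(b+d) := by ring
        omega
      have g1 : Nat.gcd ((a+c)+c) ((b+d)+d) ∣ ((b+d)+d) := Nat.gcd_dvd_right _ _
      have g2 : Nat.gcd ((a+c)+c) ((b+d)+d) ∣ ((a+c)+c) + ((b+d)+d) :=
        dvd_add (Nat.gcd_dvd_left _ _) g1
      have g3 : Nat.gcd ((a+c)+c) ((b+d)+d) ∣ ((a+c)+(b+d))*((b+d)+d) := g1.mul_left _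
      have g4 : Nat.gcd ((a+c)+c) ((b+d)+d) ∣ (b+d)*(((a+c)+c) + ((b+d)+d)) := g2.mul_left _
      rw [hMeq2] at g3
      exact Nat.dvd_one.mp ((Nat.dvd_add_right g4).mp g3)
    · omega
end

section
/- If u, v, and uv are lower Christoffel words with {u,v} ≠ {0,1}, then either u is a prefix of v or v is a suffix of u. -/
/-- If `u`, `v`, `uv` are lower Christoffel words with `{u,v} ≠ {0,1}`, then `u` is a
prefix of `v` or `v` is a suffix of `u`. -/
theorem christoffel_prefix_or_suffix (u v : List Bool)
    (hu : IsLowerChristoffel u) (hv : IsLowerChristoffel v)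
    (huv : IsLowerChristoffel (u ++ v))
    (hne : ¬ (u = [false] ∧ v = [true])) :
    u <+: v ∨ v <:+ u := by
  rcases hu with hu | hu | ⟨a, ha, hu⟩
  · subst hu
    rcases hv with hv | hv | ⟨b, hb, hv⟩
    · subst hv; left; exact List.prefix_rfl
    · exact absurd ⟨rfl, hv⟩ hne
    · subst hv; left; exact ⟨b ++ [true], rfl⟩
  · exfalso
    subst hu
    rcases hv with hv | hv | ⟨b, hb, hv⟩ <;> subst hv <;>
      rcases huv with h | h | ⟨c, hc, h⟩ <;> simp_all
  · subst hu
    rcases hv with hv | hv | ⟨b, hb, hv⟩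
    · exfalso
      subst hv
      rcases huv with h | h | ⟨c, hc, h⟩
      · simp at h
      · simp at h
      · have := congrArg List.reverse h
        simp [List.reverse_append] at this
    · subst hv
      right
      exact ⟨false :: a, by simp⟩
    · subst hv
      rcases huv with h | h | ⟨c, hc, h⟩
      · simp at h
      · simp at h
      · -- main case
        have hc' : c = a ++ (true :: false :: b) := by
          have h2 : a ++ (true :: false :: b) ++ [true] = c ++ [true] := by
            simpa using h
          exact (List.append_left_injective [true] h2).symm
        have key : a ++ (true :: false :: b) = b ++ (false :: true :: a) := by
          have := hc.1
          rw [hc'] at this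
          rw [← this]
          simp [List.reverse_append, ha.1, hb.1]
        rcases lt_trichotomy a.length b.length with hl | hl | hl
        · left
          have p1 : a ++ [true] <+: a ++ (true :: false :: b) := ⟨false :: b, by simp⟩
          have p2 : b <+: a ++ (true :: false :: b) := by
            rw [key]; exact ⟨false :: true :: a, rfl⟩
          have p3 : a ++ [true] <+: b :=
            List.prefix_of_prefix_length_le p1 p2 (by simp; omega)
          have : a ++ [true] <+: b ++ [true] := p3.trans ⟨[true], rfl⟩
          exact List.cons_prefix_cons.mpr ⟨rfl, this⟩
        · exfalso
          have := (List.append_inj key hl).2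
          simp at this
        · right
          have s1 : false :: b <:+ a ++ (true :: false :: b) := ⟨a ++ [true], by simp⟩
          have s2 : a <:+ a ++ (true :: false :: b) := by
            rw [key]; exact ⟨b ++ [false, true], by simp⟩
          have s3 : false :: b <:+ a := by
            have := List.prefix_of_prefix_length_le s1.reverse s2.reverse
              (by simp; omega)
            simpa using this.reverse
          obtain ⟨t, ht⟩ := s3
          have : (false :: b) ++ [true] <:+ a ++ [true] :=
            ⟨t, by rw [← List.append_assoc, ht]⟩
          have h2 : a ++ [true] <:+ false :: (a ++ [true]) := ⟨[false], rfl⟩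
          simpa using this.trans h2
end

section
/- Let w, w' be Abelian comparable Sturmian words with the same language, and let w = x₁x₂⋯, w' = x₁'x₂'⋯ be the factorizations where, for every k, x₁⋯x_k and x₁'⋯x_k' enumerate all pairs of Abelian equivalent prefixes. Then for each k, either x_k = x_k' is a single letter, or {x_k, x_k'} = {0u1, 1u0} for some central word u; in particular each x_k is a Christoffel word and x_k' is its reversal. -/
/-- The prefix of length `n` of an infinite binary word. -/
def pref (w : ℕ → Bool) (n : ℕ) : List Bool := (List.range n).map w

/-- `u` occurs as a factor of the infinite word `w`. -/
def FactorInf (u : List Bool) (w : ℕ → Bool) : Prop :=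
  ∃ i, u = (List.range u.length).map (fun j => w (i + j))

/-- The language (set of factors) of an infinite word. -/
def Lang (w : ℕ → Bool) : Set (List Bool) := {u | FactorInf u w}

/-- An infinite binary word is Sturmian if it has exactly `n+1` factors of each length `n`. -/
def Sturmian (w : ℕ → Bool) : Prop :=
  ∀ n, Set.ncard {u : List Bool | u.length = n ∧ FactorInf u w} = n + 1

/-- A finite word is a prefix of an infinite word. -/
def PrefixOf (u : List Bool) (w : ℕ → Bool) : Prop := u = pref w u.length

/-- Two finite binary words are Abelian equivalent if each letter occurs
the same number of times in both. -/
def AbelianEq (u v : List Bool) : Prop :=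
  u.length = v.length ∧ u.count true = v.count true

/-- Two infinite words are Abelian comparable if they have arbitrarily long
Abelian equivalent prefixes. -/
def AbelianComparable (w w' : ℕ → Bool) : Prop :=
  ∀ n, ∃ m, n ≤ m ∧ AbelianEq (pref w m) (pref w' m)

/-- The concatenation of the first `k` terms of a sequence of finite words. -/
def partConcat (x : ℕ → List Bool) (k : ℕ) : List Bool := (List.range k).flatMap x

/-- The sequence `x` of nonempty finite words is a factorization of the infinite word `w`,
i.e. `w = x₀x₁x₂⋯`. -/
def Factorizes (w : ℕ → Bool) (x : ℕ → List Bool) : Prop :=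
  (∀ k, x k ≠ []) ∧ ∀ k, PrefixOf (partConcat x k) w


/-- window -/
def win (w : ℕ → Bool) (i n : ℕ) : List Bool := (List.range n).map (fun j => w (i + j))

@[simp] lemma win_length (w i n) : (win w i n).length = n := by simp [win]

lemma win_succ (w i n) : win w i (n+1) = win w i n ++ [w (i + n)] := by
  simp [win, List.range_succ]

lemma win_cons (w i n) : win w i (n+1) = w i :: win w (i+1) n := by
  unfold win
  rw [List.range_succ_eq_map, List.map_cons, List.map_map]
  congr 1
  apply List.map_congr_left; intro a _
  show w (i + (a+1)) = w (i + 1 + a); congr 1; omega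

lemma win_add (w : ℕ → Bool) (i a b : ℕ) : win w i (a + b) = win w i a ++ win w (i + a) b := by
  induction b with
  | zero => simp [win]
  | succ b ih => rw [show a + (b+1) = (a+b) + 1 by ring, win_succ, ih, win_succ]
                 simp; ring_nf

lemma win_getElem (w i n) (j : ℕ) (h : j < n) : (win w i n)[j]'(by simpa using h) = w (i + j) := by
  simp [win]

lemma pref_eq_win (w n) : pref w n = win w 0 n := by
  unfold pref win; apply List.map_congr_left; intro a _; show w a = w (0 + a); congr 1; omega

lemma factorInf_iff_win (u : List Bool) (w : ℕ → Bool) :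
    FactorInf u w ↔ ∃ i, u = win w i u.length := Iff.rfl

lemma win_factorInf (w i n) : FactorInf (win w i n) w := ⟨i, by rw [win_length]; rfl⟩

lemma factorInf_of_infix {u v : List Bool} {w : ℕ → Bool} (h : u <:+: v) (hv : FactorInf v w) :
    FactorInf u w := by
  obtain ⟨i, hv⟩ := hv
  obtain ⟨s, t, hst⟩ := h
  refine ⟨i + s.length, ?_⟩
  have hlen : v.length = s.length + (u.length + t.length) := by
    rw [← hst]; simp
  have hv' : s ++ (u ++ t) = win w i s.length ++
      (win w (i + s.length) u.length ++ win w (i + s.length + u.length) t.length) := by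
    have : win w i v.length = win w i s.length ++
        (win w (i + s.length) u.length ++ win w (i + s.length + u.length) t.length) := by
      rw [hlen, win_add, win_add]
    rw [← this, show win w i v.length = v from hv.symm, ← hst]; simp
  have h2 := List.append_inj_right hv' (by simp)
  exact List.append_inj_left h2 (by simp)

lemma pref_factorInf (w n) : FactorInf (pref w n) w := by
  rw [pref_eq_win]; exact win_factorInf w 0 n

lemma mem_lang_iff {u : List Bool} {w : ℕ → Bool} : u ∈ Lang w ↔ FactorInf u w := Iff.rfl

open scoped Classical

/-- all binary words of length n -/
noncomputable def allWords (n : ℕ) : Finset (List Bool) :=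
  (Finset.univ : Finset (Fin n → Bool)).image (fun f => List.ofFn f)

lemma mem_allWords {n : ℕ} {l : List Bool} : l ∈ allWords n ↔ l.length = n := by
  constructor
  · rintro h
    simp only [allWords, Finset.mem_image] at h
    obtain ⟨f, _, rfl⟩ := h
    simp
  · intro h
    simp only [allWords, Finset.mem_image]
    refine ⟨fun j => l.get (Fin.cast h.symm j), Finset.mem_univ _, ?_⟩
    apply List.ext_getElem (by simp [h])
    intro j h1 h2
    simp [List.getElem_ofFn]

/-- the factors of length n as a Finset -/
noncomputable def Fset (w : ℕ → Bool) (n : ℕ) : Finset (List Bool) :=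
  (allWords n).filter (fun u => FactorInf u w)

lemma mem_Fset {w n} {u : List Bool} : u ∈ Fset w n ↔ u.length = n ∧ FactorInf u w := by
  simp [Fset, mem_allWords]

lemma win_mem_Fset (w i n) : win w i n ∈ Fset w n := by
  rw [mem_Fset]; exact ⟨win_length w i n, win_factorInf w i n⟩

lemma Fset_card {w : ℕ → Bool} (hw : Sturmian w) (n : ℕ) : (Fset w n).card = n + 1 := by
  have : {u : List Bool | u.length = n ∧ FactorInf u w} = ↑(Fset w n) := by
    ext u; simp [mem_Fset]
  have h := hw n
  rw [this, Set.ncard_coe_finset] at h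
  exact h

/-- right extension exists -/
lemma exists_right_ext {w : ℕ → Bool} {u : List Bool} (h : FactorInf u w) :
    ∃ b, FactorInf (u ++ [b]) w := by
  obtain ⟨i, hu⟩ := h
  refine ⟨w (i + u.length), ?_⟩
  have : u ++ [w (i + u.length)] = win w i (u.length + 1) := by
    rw [win_succ]
    exact congrArg (· ++ [w (i + u.length)]) hu
  rw [this]
  have := win_factorInf w i (u.length + 1)
  simpa using this


lemma eq_take_append {u : List Bool} {n : ℕ} (h : u.length = n + 1) :
    u = u.take n ++ [u[n]'(by omega)] := by
  apply List.ext_getElem (by simp [h]; try omega)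
  intro j h1 h2
  rcases Nat.lt_or_ge j n with hj | hj
  · rw [List.getElem_append_left (by simp [h]; try omega)]
    simp
  · have hjn : j = n := by omega
    subst hjn
    rw [List.getElem_append_right (by simp)]
    simp

/-- the set of right-special factors of length n -/
noncomputable def RSset (w : ℕ → Bool) (n : ℕ) : Finset (List Bool) :=
  (Fset w n).filter (fun v => FactorInf (v ++ [false]) w ∧ FactorInf (v ++ [true]) w)

lemma take_mem_Fset {w : ℕ → Bool} {n : ℕ} {u : List Bool} (h : u ∈ Fset w (n+1)) :
    u.take n ∈ Fset w n := by
  rw [mem_Fset] at h ⊢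
  refine ⟨by simp [h.1], factorInf_of_infix ?_ h.2⟩
  exact (List.take_prefix _ _).isInfix

lemma RS_card {w : ℕ → Bool} (hw : Sturmian w) (n : ℕ) : (RSset w n).card = 1 := by
  have key : (Fset w (n+1)).card = ∑ v ∈ Fset w n, ((Fset w (n+1)).filter (fun u => u.take n = v)).card := by
    apply Finset.card_eq_sum_card_fiberwise
    intro u hu; exact take_mem_Fset hu
  have fib : ∀ v ∈ Fset w n, ((Fset w (n+1)).filter (fun u => u.take n = v)).card
      = if v ∈ RSset w n then 2 else 1 := by
    intro v hv
    have hvlen : v.length = n := (mem_Fset.mp hv).1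
    have hchar : ∀ u, u ∈ (Fset w (n+1)).filter (fun u => u.take n = v) ↔
        ∃ b, u = v ++ [b] ∧ FactorInf (v ++ [b]) w := by
      intro u
      simp only [Finset.mem_filter, mem_Fset]
      constructor
      · rintro ⟨⟨hlen, hf⟩, htake⟩
        have he := eq_take_append hlen
        rw [htake] at he
        exact ⟨u[n]'(by omega), he, he ▸ hf⟩
      · rintro ⟨b, rfl, hf⟩
        refine ⟨⟨by simp [hvlen], hf⟩, by simp [hvlen]⟩
    by_cases hrs : v ∈ RSset w n
    · rw [if_pos hrs]
      have : (Fset w (n+1)).filter (fun u => u.take n = v) = {v ++ [false], v ++ [true]} := by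
        ext u
        rw [hchar]
        simp only [Finset.mem_insert, Finset.mem_singleton]
        constructor
        · rintro ⟨b, rfl, _⟩; cases b <;> simp
        · rintro (rfl | rfl)
          · exact ⟨false, rfl, ((Finset.mem_filter.mp hrs).2).1⟩
          · exact ⟨true, rfl, ((Finset.mem_filter.mp hrs).2).2⟩
      rw [this]
      rw [Finset.card_insert_of_notMem (by simp), Finset.card_singleton]
    · rw [if_neg hrs]
      obtain ⟨b, hb⟩ := exists_right_ext (mem_Fset.mp hv).2
      have hnb : ¬ FactorInf (v ++ [!b]) w := by
        intro hnb
        apply hrs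
        rw [RSset, Finset.mem_filter]
        cases b
        · exact ⟨hv, hb, by simpa using hnb⟩
        · exact ⟨hv, by simpa using hnb, hb⟩
      have : (Fset w (n+1)).filter (fun u => u.take n = v) = {v ++ [b]} := by
        ext u
        rw [hchar]
        simp only [Finset.mem_singleton]
        constructor
        · rintro ⟨c, rfl, hc⟩
          by_cases hcb : c = b
          · rw [hcb]
          · exfalso; apply hnb
            rw [show (!b) = c by cases b <;> cases c <;> simp_all]
            exact hc
        · rintro rfl; exact ⟨b, rfl, hb⟩
      rw [this, Finset.card_singleton]
  rw [Finset.sum_congr rfl fib, Fset_card hw] at key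
  have h2 : ∀ x ∈ Fset w n, (if x ∈ RSset w n then 2 else 1) = 1 + (if x ∈ RSset w n then 1 else 0) := by
    intro x _; split <;> rfl
  rw [Finset.sum_congr rfl h2, Finset.sum_add_distrib, Finset.sum_const, ← Finset.card_filter] at key
  have h3 : (Fset w n).filter (fun x => x ∈ RSset w n) = RSset w n := by
    ext x
    simp only [Finset.mem_filter, and_iff_right_iff_imp]
    intro hx
    exact Finset.mem_of_mem_filter x hx
  rw [h3, Fset_card hw] at key
  simp only [smul_eq_mul, mul_one] at key
  omega

lemma win_take (w : ℕ → Bool) (i a b : ℕ) : (win w i (a + b)).take a = win w i a := by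
  rw [win_add, List.take_left']
  simp

lemma win_tail (w : ℕ → Bool) (i m : ℕ) (h : win w i (m+1) = win w i' (m+1)) :
    win w (i+1) m = win w (i'+1) m := by
  rw [win_cons, win_cons] at h
  exact List.tail_eq_of_cons_eq h

lemma win_last (w : ℕ → Bool) (i m : ℕ) (h : win w i (m+1) = win w i' (m+1)) :
    w (i + m) = w (i' + m) := by
  rw [win_succ, win_succ] at h
  have := List.append_inj_right h (by simp)
  simpa using this

lemma win_head (w : ℕ → Bool) {i i' m : ℕ} (h : win w i (m+1) = win w i' (m+1)) :
    w i = w i' := by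
  rw [win_cons, win_cons] at h
  exact List.head_eq_of_cons_eq h

/-- a Sturmian word is not eventually periodic -/
lemma not_periodic {w : ℕ → Bool} (hw : Sturmian w) (N p : ℕ) (hp : 0 < p)
    (h : ∀ m, N ≤ m → w (m + p) = w m) : False := by
  have key : ∀ k i, ∃ i' < N + p, win w i' k = win w i k := by
    intro k i
    induction i using Nat.strong_induction_on with
    | _ i ih =>
      rcases Nat.lt_or_ge i (N + p) with hi | hi
      · exact ⟨i, hi, rfl⟩
      · obtain ⟨i', hi', he⟩ := ih (i - p) (by omega)
        refine ⟨i', hi', he.trans ?_⟩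
        unfold win
        apply List.map_congr_left
        intro j _
        have : i + j = (i - p + j) + p := by omega
        rw [this, h _ (by omega)]
  have hsub : Fset w (N + p + 1) ⊆ (Finset.range (N + p)).image (fun i => win w i (N + p + 1)) := by
    intro u hu
    rw [mem_Fset] at hu
    obtain ⟨i, he⟩ := hu.2
    rw [hu.1] at he
    obtain ⟨i', hi', he'⟩ := key (N + p + 1) i
    rw [Finset.mem_image]
    exact ⟨i', Finset.mem_range.mpr hi', (he'.trans he.symm)⟩
  have h1 := Finset.card_le_card hsub
  rw [Fset_card hw] at h1
  have h2 := Finset.card_image_le (s := Finset.range (N + p)) (f := fun i => win w i (N + p + 1))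
  rw [Finset.card_range] at h2
  omega

/-- every factor of a Sturmian word occurs beyond any given position -/
lemma recurrent {w : ℕ → Bool} (hw : Sturmian w) (u : List Bool) (hu : FactorInf u w) (M : ℕ) :
    ∃ i, M ≤ i ∧ u = win w i u.length := by
  by_contra hnot
  push_neg at hnot
  set l := u.length with hl
  -- the factors of the tail
  set G : ℕ → Finset (List Bool) :=
    fun m => (Fset w m).filter (fun v => ∃ i, M ≤ i ∧ v = win w i m) with hG
  have hGmem : ∀ m v, v ∈ G m ↔ (∃ i, M ≤ i ∧ v = win w i m) := by
    intro m v
    rw [hG]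
    simp only [Finset.mem_filter]
    constructor
    · rintro ⟨_, h⟩; exact h
    · rintro ⟨i, hi, rfl⟩
      exact ⟨win_mem_Fset w i m, i, hi, rfl⟩
  have hmono : ∀ m, (G m).card ≤ (G (m+1)).card := by
    intro m
    apply Finset.card_le_card_of_surjOn (fun v => v.take m)
    intro v hv
    rw [Finset.mem_coe] at hv
    obtain ⟨i, hi, rfl⟩ := (hGmem m v).mp hv
    exact ⟨win w i (m+1), Finset.mem_coe.mpr ((hGmem (m+1) _).mpr ⟨i, hi, rfl⟩), win_take w i m 1⟩
  have hmono' : ∀ a b, a ≤ b → (G a).card ≤ (G b).card := by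
    intro a b hab
    induction b with
    | zero => simp_all
    | succ b ih =>
      rcases Nat.lt_or_ge a (b+1) with h | h
      · exact le_trans (ih (by omega)) (hmono b)
      · have : a = b + 1 := by omega
        subst this; rfl
  have hl0 : l ≠ 0 := by
    intro h0
    apply hnot M le_rfl
    have hu0 : u = [] := List.eq_nil_of_length_eq_zero (by omega)
    rw [hu0]
    symm
    rw [← List.length_eq_zero_iff, win_length]
    omega
  have hGl : (G l).card ≤ l := by
    have hsub : G l ⊆ (Fset w l).erase u := by
      intro v hv
      obtain ⟨i, hi, rfl⟩ := (hGmem l v).mp hv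
      rw [Finset.mem_erase]
      exact ⟨fun he => hnot i hi he.symm, win_mem_Fset w i l⟩
    have := Finset.card_le_card hsub
    have h2 : ((Fset w l).erase u).card = l := by
      rw [Finset.card_erase_of_mem (mem_Fset.mpr ⟨rfl, hu⟩), Fset_card hw]
      omega
    omega
  have hG0 : 1 ≤ (G 0).card := by
    rw [Finset.one_le_card]
    exact ⟨[], (hGmem 0 []).mpr ⟨M, le_rfl, rfl⟩⟩
  -- find a level where the cardinality stalls
  have hstall : ∃ m < l, (G (m+1)).card = (G m).card := by
    by_contra hc
    push_neg at hc
    have : ∀ m ≤ l, m + 1 ≤ (G m).card := by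
      intro m hm
      induction m with
      | zero => simpa using hG0
      | succ m ih =>
        have h1 := ih (by omega)
        have h2 := hc m (by omega)
        have h3 := hmono m
        omega
    have := this l le_rfl
    omega
  obtain ⟨m, hml, hstall⟩ := hstall
  -- injectivity of take on G (m+1)
  have hinj : ∀ v₁ ∈ G (m+1), ∀ v₂ ∈ G (m+1), v₁.take m = v₂.take m → v₁ = v₂ := by
    have := Finset.inj_on_of_surj_on_of_card_le (s := G (m+1)) (t := G m) (f := fun v _ => v.take m)
      (hf := ?_) (hsurj := ?_) (hst := by omega)
    · intro v₁ hv₁ v₂ hv₂ he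
      exact this hv₁ hv₂ he
    · intro a ha
      obtain ⟨i, hi, rfl⟩ := (hGmem (m+1) a).mp ha
      show (win w i (m+1)).take m ∈ G m
      rw [win_take w i m 1]
      exact (hGmem m _).mpr ⟨i, hi, rfl⟩
    · intro b hb
      obtain ⟨i, hi, rfl⟩ := (hGmem m b).mp hb
      exact ⟨win w i (m+1), (hGmem (m+1) _).mpr ⟨i, hi, rfl⟩, win_take w i m 1⟩
  -- tail determinism
  have hdet : ∀ i i', M ≤ i → M ≤ i' → win w i m = win w i' m → w (i + m) = w (i' + m) := by
    intro i i' hi hi' he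
    have h1 : win w i (m+1) ∈ G (m+1) := (hGmem _ _).mpr ⟨i, hi, rfl⟩
    have h2 : win w i' (m+1) ∈ G (m+1) := (hGmem _ _).mpr ⟨i', hi', rfl⟩
    have h3 : (win w i (m+1)).take m = (win w i' (m+1)).take m := by
      rw [win_take, win_take]; exact he
    exact win_last w i m (hinj _ h1 _ h2 h3)
  -- pigeonhole on positions M..M+l
  have hpig : ∃ r₁ < l + 1, ∃ r₂ < l + 1, r₁ ≠ r₂ ∧ win w (M + r₁) m = win w (M + r₂) m := by
    have hcard : (G m).card < (Finset.range (l+1)).card := by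
      rw [Finset.card_range]
      have := hmono' m l (by omega)
      omega
    have hmaps : ∀ r ∈ Finset.range (l+1), win w (M + r) m ∈ G m := by
      intro r _
      exact (hGmem _ _).mpr ⟨M + r, by omega, rfl⟩
    obtain ⟨r₁, hr₁, r₂, hr₂, hne, he⟩ :=
      Finset.exists_ne_map_eq_of_card_lt_of_maps_to hcard hmaps
    exact ⟨r₁, Finset.mem_range.mp hr₁, r₂, Finset.mem_range.mp hr₂, hne, he⟩
  obtain ⟨r₁, hr₁, r₂, hr₂, hne, he⟩ := hpig
  -- wlog r₁ < r₂
  rcases Nat.lt_or_ge r₁ r₂ with hlt | hge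
  case _ =>
    have := hlt
    -- propagate equality
    have hprop : ∀ s, win w (M + r₁ + s) m = win w (M + r₂ + s) m := by
      intro s
      induction s with
      | zero => simpa using he
      | succ s ih =>
        have hlast := hdet (M + r₁ + s) (M + r₂ + s) (by omega) (by omega) ih
        have : win w (M + r₁ + s) (m+1) = win w (M + r₂ + s) (m+1) := by
          rw [win_succ, win_succ, ih, hlast]
        have := win_tail w _ _ this
        convert this using 2 <;> omega
    apply not_periodic hw (M + r₁ + m) (r₂ - r₁) (by omega)
    intro q hq
    have h1 := hprop (q - (M + r₁ + m))
    have h3 := hdet (M + r₁ + (q - (M + r₁ + m))) (M + r₂ + (q - (M + r₁ + m))) (by omega) (by omega) h1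
    have e1 : M + r₁ + (q - (M + r₁ + m)) + m = q := by omega
    have e2 : M + r₂ + (q - (M + r₁ + m)) + m = q + (r₂ - r₁) := by omega
    rw [e1, e2] at h3
    exact h3.symm
  case _ =>
    have hlt : r₂ < r₁ := by omega
    have hprop : ∀ s, win w (M + r₂ + s) m = win w (M + r₁ + s) m := by
      intro s
      induction s with
      | zero => simpa using he.symm
      | succ s ih =>
        have hlast := hdet (M + r₂ + s) (M + r₁ + s) (by omega) (by omega) ih
        have : win w (M + r₂ + s) (m+1) = win w (M + r₁ + s) (m+1) := by
          rw [win_succ, win_succ, ih, hlast]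
        have := win_tail w _ _ this
        convert this using 2 <;> omega
    apply not_periodic hw (M + r₂ + m) (r₁ - r₂) (by omega)
    intro q hq
    have h1 := hprop (q - (M + r₂ + m))
    have h3 := hdet (M + r₂ + (q - (M + r₂ + m))) (M + r₁ + (q - (M + r₂ + m))) (by omega) (by omega) h1
    have e1 : M + r₂ + (q - (M + r₂ + m)) + m = q := by omega
    have e2 : M + r₁ + (q - (M + r₂ + m)) + m = q + (r₁ - r₂) := by omega
    rw [e1, e2] at h3
    exact h3.symm


lemma ne_true_false {b : Bool} (h : ¬ b = true) : b = false := by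
  cases b
  · rfl
  · exact absurd rfl h

lemma getElem_idx_congr {l : List Bool} {i j : ℕ} (h : i = j) (hi : i < l.length) :
    l[i]'hi = l[j]'(h ▸ hi) := by subst h; rfl

lemma win_two (w : ℕ → Bool) (m : ℕ) : win w m 2 = [w m, w (m+1)] := by
  rw [show (2:ℕ) = 1 + 1 from rfl, win_cons, win_cons]
  rfl

lemma win_elem_eq {w : ℕ → Bool} {t : List Bool} {i n j : ℕ} (hj : j < n) (he : t = win w i n) :
    t[j]'(by rw [he, win_length]; exact hj) = w (i + j) := by
  rw [List.getElem_of_eq he]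
  exact win_getElem w i n j hj

lemma pal_elem {t : List Bool} (hpal : t.reverse = t) {j : ℕ} (hj : j < t.length) :
    t[j]'hj = t[t.length - 1 - j]'(by omega) := by
  have h1 := List.getElem_of_eq hpal (i := j) (by simpa using hj)
  rw [← h1, List.getElem_reverse]

/-- determinism: a non-right-special window extends uniquely -/
lemma window_det {w : ℕ → Bool} {t : List Bool} {n : ℕ}
    (hRS : RSset w n = {t}) {i i' : ℕ} (he : win w i n = win w i' n)
    (hne : win w i n ≠ t) : w (i + n) = w (i' + n) := by
  by_contra hc
  apply hne
  have h1 : FactorInf (win w i n ++ [w (i + n)]) w := by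
    rw [← win_succ]; exact win_factorInf w i (n+1)
  have h2 : FactorInf (win w i n ++ [w (i' + n)]) w := by
    rw [he, ← win_succ]; exact win_factorInf w i' (n+1)
  have hmem : win w i n ∈ RSset w n := by
    rw [RSset, Finset.mem_filter]
    refine ⟨win_mem_Fset w i n, ?_, ?_⟩
    · cases hb : w (i + n)
      · exact hb ▸ h1
      · have : w (i' + n) = false := by cases hb' : w (i' + n) <;> simp_all
        exact this ▸ h2
    · cases hb : w (i + n)
      · have : w (i' + n) = true := by cases hb' : w (i' + n) <;> simp_all
        exact this ▸ h2
      · exact hb ▸ h1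
  rw [hRS, Finset.mem_singleton] at hmem
  exact hmem

/-- The core contradiction: a Sturmian word cannot contain 0t0 and 1t1 (t a palindrome)
    while omitting 1t0. -/
lemma core_contra {w : ℕ → Bool} (hw : Sturmian w) {t : List Bool} (hpal : t.reverse = t)
    (h00 : FactorInf (false :: (t ++ [false])) w)
    (h11 : FactorInf (true :: (t ++ [true])) w)
    (h10 : ¬ FactorInf (true :: (t ++ [false])) w) : False := by
  set n := t.length with hn
  have ht1 : FactorInf (t ++ [true]) w :=
    factorInf_of_infix ⟨[true], [], by simp⟩ h11
  obtain ⟨i₀, hocc₀, hch₀⟩ : ∃ i, t = win w i n ∧ w (i + n) = true := by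
    obtain ⟨i, hi⟩ := ht1
    have hlen : (t ++ [true]).length = n + 1 := by simp [hn]
    rw [hlen] at hi
    rw [show (List.range (n+1)).map (fun j => w (i+j)) = win w i (n+1) from rfl, win_succ] at hi
    have h1 := List.append_inj_left hi (by simp [hn])
    have h2 := List.append_inj_right hi (by simp [hn])
    exact ⟨i, h1, by simpa using h2.symm⟩
  rcases Nat.eq_zero_or_pos n with hn0 | hnpos
  · -- degenerate case: t = []
    have ht : t = [] := List.eq_nil_of_length_eq_zero (by omega)
    subst ht
    have hstep : ∀ m, w m = true → w (m + 1) = true := by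
      intro m hm
      by_contra hc
      apply h10
      refine ⟨m, ?_⟩
      have hf : w (m+1) = false := ne_true_false hc
      show true :: ([] ++ [false]) = win w m 2
      rw [win_two, hm, hf]
      rfl
    have hall : ∀ m, i₀ ≤ m → w m = true := by
      intro m hm
      induction m with
      | zero =>
        have h0 : i₀ = 0 := by omega
        have h1 := hch₀
        rw [h0] at h1
        simpa [hn0] using h1
      | succ m ih =>
        rcases Nat.lt_or_ge i₀ (m+1) with h | h
        · exact hstep m (ih (by omega))
        · have : i₀ = m + 1 := by omega
          subst this
          simpa [hn0] using hch₀
    exact not_periodic hw i₀ 1 one_pos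
      (fun m hm => by rw [hall m hm, hall (m+1) (by omega)])
  -- main case : n ≥ 1
  have htfac : FactorInf t w := factorInf_of_infix ⟨[true], [true], by simp⟩ h11
  have ht0 : FactorInf (t ++ [false]) w :=
    factorInf_of_infix ⟨[false], [], by simp⟩ h00
  have htRS : t ∈ RSset w n := by
    rw [RSset, Finset.mem_filter]
    exact ⟨mem_Fset.mpr ⟨rfl, htfac⟩, ht0, ht1⟩
  have hRSeq : RSset w n = {t} := by
    obtain ⟨a, ha⟩ := Finset.card_eq_one.mp (RS_card hw n)
    rw [ha] at htRS ⊢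
    rw [Finset.mem_singleton] at htRS
    rw [htRS]
  -- next occurrence of t after i₀
  have hP : ∃ d, t = win w (i₀ + 1 + d) n := by
    obtain ⟨j, hjM, hj⟩ := recurrent hw t htfac (i₀ + 1)
    exact ⟨j - (i₀ + 1), by rw [show i₀ + 1 + (j - (i₀+1)) = j by omega]; exact hj⟩
  set d₀ := Nat.find hP with hd₀
  set q := d₀ + 1 with hqdef
  have hqocc : t = win w (i₀ + q) n := by
    have := Nat.find_spec hP
    rwa [show i₀ + 1 + d₀ = i₀ + q by omega] at this
  have hqmin : ∀ s, 0 < s → s < q → win w (i₀ + s) n ≠ t := by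
    intro s hs1 hs2 hcon
    have := Nat.find_min hP (m := s - 1) (by omega)
    apply this
    rw [show i₀ + 1 + (s-1) = i₀ + s by omega]
    exact hcon.symm
  have hq1 : 1 ≤ q := by omega
  -- Step A : q ≤ n + 1
  have hqn : q ≤ n + 1 := by
    have hmapsTo : ∀ s ∈ Finset.range q, win w (i₀ + s) n ∈ Fset w n :=
      fun s _ => win_mem_Fset w (i₀ + s) n
    have hkey : ∀ s s', 0 < s → s < s' → s' < q →
        win w (i₀ + s) n = win w (i₀ + s') n → False := by
      intro s s' hs hss' hs'q heq
      have hprop : ∀ r, r ≤ q - s' → win w (i₀ + s + r) n = win w (i₀ + s' + r) n := by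
        intro r hr
        induction r with
        | zero => simpa using heq
        | succ r ih =>
          have ihe := ih (by omega)
          have hnet : win w (i₀ + s + r) n ≠ t := by
            rw [ihe, show i₀ + s' + r = i₀ + (s' + r) by omega]
            exact hqmin (s' + r) (by omega) (by omega)
          have hlet := window_det hRSeq ihe hnet
          have : win w (i₀ + s + r) (n+1) = win w (i₀ + s' + r) (n+1) := by
            rw [win_succ, win_succ, ihe, hlet]
          have h2 := win_tail w _ _ this
          rw [show i₀ + s + r + 1 = i₀ + s + (r+1) by omega,
              show i₀ + s' + r + 1 = i₀ + s' + (r+1) by omega] at h2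
          exact h2
      have hfin := hprop (q - s') le_rfl
      rw [show i₀ + s' + (q - s') = i₀ + q by omega] at hfin
      rw [← hqocc] at hfin
      exact hqmin (s + (q - s')) (by omega) (by omega) (by rw [show i₀ + (s + (q-s')) = i₀ + s + (q - s') by omega]; exact hfin)
    have hinj : Set.InjOn (fun s => win w (i₀ + s) n) (Finset.range q) := by
      intro s hs s' hs' heq
      simp only [Finset.coe_range, Set.mem_Iio] at hs hs'
      by_contra hne
      rcases Nat.lt_or_ge s s' with h | h
      · rcases Nat.eq_zero_or_pos s with h0 | h0
        · subst h0
          simp only at heq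
          exact hqmin s' (by omega) hs' (by rw [← heq, show i₀ + 0 = i₀ by omega, ← hocc₀])
        · exact hkey s s' h0 h hs' heq
      · have h : s' < s := by omega
        rcases Nat.eq_zero_or_pos s' with h0 | h0
        · subst h0
          simp only at heq
          exact hqmin s (by omega) hs (by rw [heq, show i₀ + 0 = i₀ by omega, ← hocc₀])
        · exact hkey s' s h0 h hs heq.symm
    have := Finset.card_le_card_of_injOn _ hmapsTo hinj
    rw [Finset.card_range, Fset_card hw] at this
    exact this
  -- Step B : the letter before the next occurrence is true
  have hB : w (i₀ + (q - 1)) = true := by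
    rcases Nat.lt_or_ge q (n+1) with hlt | hge
    · -- q ≤ n
      have hq_le : q ≤ n := by omega
      have hb1 : q - 1 < n := by omega
      have hb2 : n - q < n := by omega
      have e1 : t[q-1]'(by rw [hocc₀, win_length]; exact hb1) = w (i₀ + (q-1)) :=
        win_elem_eq hb1 hocc₀
      have e2 : t[n-q]'(by rw [hqocc, win_length]; exact hb2) = true := by
        rw [win_elem_eq hb2 hqocc, show i₀ + q + (n - q) = i₀ + n by omega]
        exact hch₀
      have e3 := pal_elem hpal (j := q - 1) (by omega)
      have e4 : t[t.length - 1 - (q-1)]'(by omega) = t[n-q]'(by omega) :=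
        getElem_idx_congr (by omega) _
      calc w (i₀ + (q-1)) = t[q-1]'(by omega) := e1.symm
        _ = t[t.length - 1 - (q-1)]'(by omega) := e3
        _ = t[n-q]'(by omega) := e4
        _ = true := e2
    · -- q = n + 1
      have : q = n + 1 := by omega
      rw [show i₀ + (q-1) = i₀ + n by omega]
      exact hch₀
  -- Step C : synchronization
  have hsync : ∀ j, t = win w j n → w (j + n) = true →
      ∀ s, s ≤ q → win w (j + s) n = win w (i₀ + s) n := by
    intro j hj hjc s hs
    induction s with
    | zero => simp only [Nat.add_zero]; rw [← hj, hocc₀]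
    | succ s ih =>
      have ihe := ih (by omega)
      have hlet : w (j + s + n) = w (i₀ + s + n) := by
        rcases Nat.eq_zero_or_pos s with h0 | h0
        · subst h0
          simp only [Nat.add_zero]
          rw [hjc, hch₀]
        · have hnet : win w (j + s) n ≠ t := by
            rw [ihe]
            exact hqmin s h0 (by omega)
          exact window_det hRSeq ihe hnet
      have : win w (j + s) (n+1) = win w (i₀ + s) (n+1) := by
        rw [win_succ, win_succ, ihe, hlet]
      have h2 := win_tail w _ _ this
      rw [show j + s + 1 = j + (s+1) by omega, show i₀ + s + 1 = i₀ + (s+1) by omega] at h2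
      exact h2
  -- Step C' : one step of the return map
  have hstep : ∀ j, t = win w j n → w (j + n) = true →
      t = win w (j + q) n ∧ w (j + q + n) = true := by
    intro j hj hjc
    have hocc' : t = win w (j + q) n := by
      rw [hsync j hj hjc q le_rfl]
      exact hqocc
    have hprev : w (j + (q-1)) = true := by
      have hweq := hsync j hj hjc (q-1) (by omega)
      have hw1 : win w (j + (q-1)) ((n-1)+1) = win w (i₀ + (q-1)) ((n-1)+1) := by
        rw [show (n-1)+1 = n by omega]
        exact hweq
      rw [win_head w hw1]
      exact hB
    have hch' : w (j + q + n) = true := by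
      by_contra hc
      apply h10
      have hfalse : w (j + q + n) = false := ne_true_false hc
      refine ⟨j + (q-1), ?_⟩
      have hlen : (true :: (t ++ [false])).length = n + 2 := by simp [hn]
      rw [hlen]
      show true :: (t ++ [false]) = win w (j + (q-1)) (n+2)
      rw [show n + 2 = (n+1)+1 by omega, win_cons, win_succ]
      rw [show j + (q-1) + 1 = j + q by omega, ← hocc']
      rw [hprev, hfalse]
    exact ⟨hocc', hch'⟩
  -- Step D : iterate
  have hiter : ∀ k, t = win w (i₀ + q * k) n ∧ w (i₀ + q * k + n) = true := by
    intro k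
    induction k with
    | zero => simpa using ⟨hocc₀, hch₀⟩
    | succ k ih =>
      have := hstep _ ih.1 ih.2
      rwa [show i₀ + q * k + q = i₀ + q * (k+1) by ring] at this
  -- Step E : eventual periodicity
  have hper : ∀ m, i₀ ≤ m → w (m + q) = w m := by
    intro m hm
    set k := (m - i₀) / q with hk
    set s := (m - i₀) % q with hs
    have hdm := Nat.div_add_mod (m - i₀) q
    rw [← hk, ← hs] at hdm
    have hslt : s < q := by
      rw [hs]
      exact Nat.mod_lt _ (by omega)
    have hm_eq : m = i₀ + q * k + s := by omega
    have hlet : ∀ k', w (i₀ + q * k' + s) = w (i₀ + s) := by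
      intro k'
      obtain ⟨h1, h2⟩ := hiter k'
      have hweq := hsync _ h1 h2 s (by omega)
      have hw1 : win w (i₀ + q * k' + s) ((n-1)+1) = win w (i₀ + s) ((n-1)+1) := by
        rw [show (n-1)+1 = n by omega]
        exact hweq
      exact win_head w hw1
    rw [hm_eq, show i₀ + q * k + s + q = i₀ + q * (k+1) + s by ring, hlet, hlet]
  exact not_periodic hw i₀ q (by omega) hper


lemma first_diff : ∀ (s r : List Bool), s.length = r.length → s ≠ r →
    ∃ z a s₂ r₂, s = z ++ a :: s₂ ∧ r = z ++ (!a) :: r₂ ∧ s₂.length = r₂.length := by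
  intro s
  induction s with
  | nil =>
    intro r hlen hne
    cases r with
    | nil => exact absurd rfl hne
    | cons b r' => simp at hlen
  | cons a s' ih =>
    intro r hlen hne
    cases r with
    | nil => simp at hlen
    | cons b r' =>
      by_cases hab : a = b
      · subst hab
        have hne' : s' ≠ r' := by
          intro h; apply hne; rw [h]
        obtain ⟨z, c, s₂, r₂, h1, h2, h3⟩ := ih r' (by simpa using hlen) hne'
        exact ⟨a :: z, c, s₂, r₂, by simp [h1], by simp [h2], h3⟩
      · have hb : b = !a := by cases a <;> cases b <;> simp_all
        exact ⟨[], a, s', r', by simp, by simp [hb], by simpa using hlen⟩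

lemma toNat_true : Bool.toNat true = 1 := rfl
lemma toNat_false : Bool.toNat false = 0 := rfl

lemma cnt_cons' (a : Bool) (s : List Bool) :
    (a :: s).count true = s.count true + a.toNat := by
  cases a <;> simp [List.count_cons]

lemma cnt_app1 (b : Bool) (s : List Bool) :
    (s ++ [b]).count true = s.count true + b.toNat := by
  cases b <;> simp [List.count_append]

lemma cnt_sand (a b : Bool) (s : List Bool) :
    (a :: (s ++ [b])).count true = s.count true + a.toNat + b.toNat := by
  cases a <;> cases b <;> simp [List.count_cons, List.count_append] <;> omega

lemma cnt_append (l₁ l₂ : List Bool) :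
    (l₁ ++ l₂).count true = l₁.count true + l₂.count true := List.count_append

lemma cnt_reverse (l : List Bool) : l.reverse.count true = l.count true := by simp

lemma cnt_le_len (l : List Bool) : l.count true ≤ l.length := List.count_le_length

/-- from any unbalanced pair in a factorial language, get a palindrome t with 0t0, 1t1. -/
lemma unbal_pair (P : List Bool → Prop) (hinf : ∀ u v, u <:+: v → P v → P u) :
    ∀ N (u v : List Bool), u.length = N → v.length = N → P u → P v →
    v.count true + 2 ≤ u.count true →
    ∃ t, t.reverse = t ∧ P (false :: (t ++ [false])) ∧ P (true :: (t ++ [true])) := by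
  intro N
  induction N using Nat.strong_induction_on with
  | _ N ih =>
  intro u v hul hvl hPu hPv hcnt
  have IH : ∀ (X Y : List Bool), X.length = Y.length → X.length < N → P X → P Y →
      Y.count true + 2 ≤ X.count true →
      ∃ t, t.reverse = t ∧ P (false :: (t ++ [false])) ∧ P (true :: (t ++ [true])) := by
    intro X Y h1 h2 hX hY hc
    exact ih X.length h2 X Y rfl h1.symm hX hY hc
  have hN2 : 2 ≤ N := by
    have h1 := cnt_le_len u
    omega
  obtain ⟨a, u₁, rfl⟩ : ∃ a u₁, u = a :: u₁ := by
    cases u with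
    | nil => simp at hul; omega
    | cons a u₁ => exact ⟨a, u₁, rfl⟩
  obtain ⟨a', v₁, rfl⟩ : ∃ a' v₁, v = a' :: v₁ := by
    cases v with
    | nil => simp at hvl; omega
    | cons a' v₁ => exact ⟨a', v₁, rfl⟩
  rcases (List.eq_nil_or_concat u₁) with h | ⟨s, b, hsb⟩
  · subst h; simp at hul; omega
  rw [List.concat_eq_append] at hsb
  subst hsb
  rcases (List.eq_nil_or_concat v₁) with h | ⟨r, b', hrb⟩
  · subst h; simp at hvl; omega
  rw [List.concat_eq_append] at hrb
  subst hrb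
  have hsl : s.length = N - 2 := by simp at hul; omega
  have hrl : r.length = N - 2 := by simp at hvl; omega
  rw [cnt_sand, cnt_sand] at hcnt
  -- first letters
  by_cases hfirst : a.toNat ≤ a'.toNat
  · refine IH (s ++ [b]) (r ++ [b']) (by simp; omega) (by simp; omega)
      (hinf _ _ ⟨[a], [], by simp⟩ hPu) (hinf _ _ ⟨[a'], [], by simp⟩ hPv) ?_
    simp only [cnt_app1, cnt_cons', cnt_reverse, Bool.not_false, Bool.not_true, toNat_true, toNat_false]
    omega
  push_neg at hfirst
  have ha : a = true := by revert hfirst; cases a <;> cases a' <;> decide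
  have ha' : a' = false := by revert hfirst; cases a <;> cases a' <;> decide
  subst ha; subst ha'
  -- last letters
  by_cases hlast : b.toNat ≤ b'.toNat
  · refine IH (true :: s) (false :: r) (by simp; omega) (by simp; omega)
      (hinf _ _ ⟨[], [b], by simp⟩ hPu) (hinf _ _ ⟨[], [b'], by simp⟩ hPv) ?_
    simp only [cnt_app1, cnt_cons', cnt_reverse, Bool.not_false, Bool.not_true, toNat_true, toNat_false] at hcnt ⊢
    omega
  push_neg at hlast
  have hb : b = true := by revert hlast; cases b <;> cases b' <;> decide
  have hb' : b' = false := by revert hlast; cases b <;> cases b' <;> decide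
  subst hb; subst hb'
  simp only [toNat_true, toNat_false] at hcnt
  have hsr : r.count true ≤ s.count true := by omega
  by_cases hsne : s = r
  · subst hsne
    by_cases hpal : s.reverse = s
    · exact ⟨s, hpal, hPv, hPu⟩
    · obtain ⟨z, c, s₂, r₂, h1, h2, h3⟩ := first_diff s s.reverse (by simp) (fun h => hpal h.symm)
      have h2' : s = r₂.reverse ++ (!c) :: z.reverse := by
        have := congrArg List.reverse h2
        simpa using this
      have hzlen : z.length + 1 ≤ s.length := by
        have := congrArg List.length h1; simp at this; omega
      cases c
      · -- X = 1 z.reverse 1 suffix of u, Y = 0 z 0 prefix of v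
        refine IH (true :: (z.reverse ++ [true])) (false :: (z ++ [false]))
          (by simp) (by simp; omega) ?_ ?_ ?_
        · apply hinf _ _ ?_ hPu
          refine ⟨true :: r₂.reverse, [], ?_⟩
          rw [show s = r₂.reverse ++ true :: z.reverse by simpa using h2']
          try simp
        · apply hinf _ _ ?_ hPv
          refine ⟨[], s₂ ++ [false], ?_⟩
          rw [h1]
          simp
        · simp only [cnt_app1, cnt_cons', cnt_reverse, Bool.not_false, Bool.not_true, toNat_true, toNat_false]
          omega
      · -- X = 1 z 1 prefix of u, Y = 0 z.reverse 0 suffix of v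
        refine IH (true :: (z ++ [true])) (false :: (z.reverse ++ [false]))
          (by simp) (by simp; omega) ?_ ?_ ?_
        · apply hinf _ _ ?_ hPu
          refine ⟨[], s₂ ++ [true], ?_⟩
          rw [h1]
          simp
        · apply hinf _ _ ?_ hPv
          refine ⟨false :: r₂.reverse, [], ?_⟩
          rw [show s = r₂.reverse ++ false :: z.reverse by simpa using h2']
          try simp
        · simp only [cnt_app1, cnt_cons', cnt_reverse, Bool.not_false, Bool.not_true, toNat_true, toNat_false]
          omega
  · obtain ⟨z, c, s₂, r₂, h1, h2, h3⟩ := first_diff s r (by omega) hsne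
    cases c
    · -- s = z 0 s₂, r = z 1 r₂ : suffixes s₂1 of u, r₂0 of v
      have hc2 : r₂.count true + 1 ≤ s₂.count true := by
        rw [h1, h2] at hsr
        simp only [cnt_append, cnt_app1, cnt_cons', cnt_reverse, Bool.not_false, Bool.not_true, toNat_true, toNat_false] at hsr
        omega
      refine IH (s₂ ++ [true]) (r₂ ++ [false]) (by simp; omega) ?_ ?_ ?_ ?_
      · have := congrArg List.length h1
        simp at this ⊢
        omega
      · apply hinf _ _ ?_ hPu
        refine ⟨true :: (z ++ [false]), [], ?_⟩
        rw [h1]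
        simp
      · apply hinf _ _ ?_ hPv
        refine ⟨false :: (z ++ [true]), [], ?_⟩
        rw [h2]
        simp
      · simp only [cnt_app1, cnt_cons', cnt_reverse, Bool.not_false, Bool.not_true, toNat_true, toNat_false]
        omega
    · -- s = z 1 s₂, r = z 0 r₂ : prefixes 1z1 of u, 0z0 of v
      refine IH (true :: (z ++ [true])) (false :: (z ++ [false])) (by simp) ?_ ?_ ?_ ?_
      · have := congrArg List.length h1
        simp at this ⊢
        omega
      · apply hinf _ _ ?_ hPu
        refine ⟨[], s₂ ++ [true], ?_⟩
        rw [h1]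
        simp
      · apply hinf _ _ ?_ hPv
        refine ⟨[], r₂ ++ [false], ?_⟩
        rw [h2]
        simp
      · simp only [cnt_app1, cnt_cons', cnt_reverse, Bool.not_false, Bool.not_true, toNat_true, toNat_false]
        omega

lemma factorInf_map_not {u : List Bool} {w : ℕ → Bool} (h : FactorInf u w) :
    FactorInf (u.map (fun b => !b)) (fun i => !(w i)) := by
  obtain ⟨i, hu⟩ := h
  refine ⟨i, ?_⟩
  rw [List.length_map]
  conv_lhs => rw [hu]
  rw [List.map_map]
  rfl

lemma sturmian_not {w : ℕ → Bool} (hw : Sturmian w) : Sturmian (fun i => !(w i)) := by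
  intro n
  have himg : {u : List Bool | u.length = n ∧ FactorInf u (fun i => !(w i))}
      = (fun u : List Bool => u.map (fun b => !b)) '' {u | u.length = n ∧ FactorInf u w} := by
    ext u
    simp only [Set.mem_image, Set.mem_setOf_eq]
    constructor
    · rintro ⟨hlen, hf⟩
      refine ⟨u.map (fun b => !b), ⟨by simp [hlen], ?_⟩, by
        rw [List.map_map, show ((fun b : Bool => !b) ∘ fun b : Bool => !b) = id by
          funext b; simp, List.map_id]⟩
      have h2 := factorInf_map_not (w := fun i => !(w i)) hf
      have h3 : (fun i => !((fun i => !(w i)) i)) = w := by funext i; simp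
      rw [h3] at h2
      exact h2
    · rintro ⟨v, ⟨hlen, hf⟩, rfl⟩
      exact ⟨by simp [hlen], factorInf_map_not hf⟩
  have hinj : Function.Injective (List.map (fun b : Bool => !b)) :=
    List.map_injective_iff.mpr (fun a b hab => by
      cases a <;> cases b <;> simp_all)
  rw [himg, Set.ncard_image_of_injective _ hinj]
  exact hw n

/-- a Sturmian word has balanced language -/
lemma lang_bal {w : ℕ → Bool} (hw : Sturmian w) :
    ∀ u v, FactorInf u w → FactorInf v w → u.length = v.length →
    u.count true ≤ v.count true + 1 := by
  by_contra hcon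
  push_neg at hcon
  obtain ⟨u, v, hu, hv, hlen, hcnt⟩ := hcon
  obtain ⟨t, hpal, h00, h11⟩ := unbal_pair (fun x => FactorInf x w)
    (fun a b hab hb => factorInf_of_infix hab hb) u.length u v rfl hlen.symm hu hv (by omega)
  set n := t.length with hn
  -- at most one of 0t, 1t is right special of length n+1
  have hnot : ¬ (FactorInf (true :: (t ++ [false])) w ∧ FactorInf (false :: (t ++ [true])) w) := by
    rintro ⟨h10, h01⟩
    have hmem0 : (false :: t) ∈ RSset w (n+1) := by
      rw [RSset, Finset.mem_filter]
      refine ⟨mem_Fset.mpr ⟨by simp [hn], factorInf_of_infix ⟨[], [false], by simp⟩ h00⟩, ?_, ?_⟩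
      · rw [show (false :: t) ++ [false] = false :: (t ++ [false]) by simp]
        exact h00
      · rw [show (false :: t) ++ [true] = false :: (t ++ [true]) by simp]
        exact h01
    have hmem1 : (true :: t) ∈ RSset w (n+1) := by
      rw [RSset, Finset.mem_filter]
      refine ⟨mem_Fset.mpr ⟨by simp [hn], factorInf_of_infix ⟨[], [true], by simp⟩ h11⟩, ?_, ?_⟩
      · rw [show (true :: t) ++ [false] = true :: (t ++ [false]) by simp]
        exact h10
      · rw [show (true :: t) ++ [true] = true :: (t ++ [true]) by simp]
        exact h11
    have hcard := RS_card hw (n+1)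
    obtain ⟨a, ha⟩ := Finset.card_eq_one.mp hcard
    rw [ha, Finset.mem_singleton] at hmem0 hmem1
    rw [← hmem1] at hmem0
    simp at hmem0
  rcases not_and_or.mp hnot with h10 | h01
  · exact core_contra hw hpal h00 h11 h10
  · -- complement case
    have hw's : Sturmian (fun i => !(w i)) := sturmian_not hw
    have h3 : (fun i => !((fun i => !(w i)) i)) = w := by funext i; simp
    have hpal' : (t.map (fun b => !b)).reverse = t.map (fun b => !b) := by
      rw [← List.map_reverse, hpal]
    have h00' : FactorInf (false :: (t.map (fun b => !b) ++ [false])) (fun i => !(w i)) := by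
      have h2 := factorInf_map_not h11
      simp only [List.map_cons, List.map_append, List.map_nil, Bool.not_true] at h2
      exact h2
    have h11' : FactorInf (true :: (t.map (fun b => !b) ++ [true])) (fun i => !(w i)) := by
      have h2 := factorInf_map_not h00
      simp only [List.map_cons, List.map_append, List.map_nil, Bool.not_false] at h2
      exact h2
    have h10' : ¬ FactorInf (true :: (t.map (fun b => !b) ++ [false])) (fun i => !(w i)) := by
      intro hc
      apply h01
      have h2 := factorInf_map_not (w := fun i => !(w i)) hc
      rw [h3] at h2
      simp only [List.map_cons, List.map_append, List.map_nil, List.map_map,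
        Bool.not_true, Bool.not_false] at h2
      have he : t.map ((fun b : Bool => !b) ∘ (fun b : Bool => !b)) = t := by
        have : ((fun b : Bool => !b) ∘ (fun b : Bool => !b)) = id := by
          funext b; simp
        rw [this, List.map_id]
      rw [he] at h2
      exact h2
    exact core_contra hw's hpal' h00' h11' h10'

lemma rev_sandwich (a b : Bool) (l : List Bool) :
    (a :: (l ++ [b])).reverse = b :: (l.reverse ++ [a]) := by simp

/-- the two-sided language Q : factors and reversed factors -/
def Qf (w : ℕ → Bool) (u : List Bool) : Prop := FactorInf u w ∨ FactorInf u.reverse w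

lemma Qf_infix {w : ℕ → Bool} {u v : List Bool} (h : u <:+: v) (hv : Qf w v) : Qf w u := by
  rcases hv with hv | hv
  · exact Or.inl (factorInf_of_infix h hv)
  · exact Or.inr (factorInf_of_infix (List.reverse_infix.mpr h) hv)

lemma Qf_bal {w : ℕ → Bool} (hw : Sturmian w) :
    ∀ u v, Qf w u → Qf w v → u.length = v.length → u.count true ≤ v.count true + 1 := by
  by_contra hcon
  push_neg at hcon
  obtain ⟨u, v, hu, hv, hlen, hcnt⟩ := hcon
  obtain ⟨t, hpal, h00, h11⟩ := unbal_pair (Qf w) (fun a b hab hb => Qf_infix hab hb)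
    u.length u v rfl hlen.symm hu hv (by omega)
  have h00' : FactorInf (false :: (t ++ [false])) w := by
    rcases h00 with h | h
    · exact h
    · rwa [rev_sandwich, hpal] at h
  have h11' : FactorInf (true :: (t ++ [true])) w := by
    rcases h11 with h | h
    · exact h
    · rwa [rev_sandwich, hpal] at h
  have := lang_bal hw _ _ h11' h00' (by simp)
  simp only [cnt_cons', cnt_app1, toNat_true, toNat_false] at this
  omega

noncomputable def USet (w : ℕ → Bool) (n : ℕ) : Finset (List Bool) :=
  Fset w n ∪ (Fset w n).image List.reverse

lemma mem_USet {w n} {u : List Bool} : u ∈ USet w n ↔ u.length = n ∧ Qf w u := by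
  rw [USet, Finset.mem_union, Finset.mem_image]
  constructor
  · rintro (h | ⟨v, hv, rfl⟩)
    · rw [mem_Fset] at h
      exact ⟨h.1, Or.inl h.2⟩
    · rw [mem_Fset] at hv
      refine ⟨by simp [hv.1], Or.inr ?_⟩
      rw [List.reverse_reverse]
      exact hv.2
  · rintro ⟨hlen, h | h⟩
    · exact Or.inl (mem_Fset.mpr ⟨hlen, h⟩)
    · refine Or.inr ⟨u.reverse, mem_Fset.mpr ⟨by simp [hlen], h⟩, by simp⟩

lemma USet_RS_unique {w : ℕ → Bool} (hw : Sturmian w) {n : ℕ} {v v' : List Bool}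
    (hv : v ∈ USet w n) (hv' : v' ∈ USet w n)
    (h1 : v ++ [false] ∈ USet w (n+1)) (h2 : v ++ [true] ∈ USet w (n+1))
    (h1' : v' ++ [false] ∈ USet w (n+1)) (h2' : v' ++ [true] ∈ USet w (n+1)) : v = v' := by
  by_contra hne
  obtain ⟨hvl, _⟩ := mem_USet.mp hv
  obtain ⟨hvl', _⟩ := mem_USet.mp hv'
  obtain ⟨z, c, s₂, r₂, e1, e2, e3⟩ := first_diff v.reverse v'.reverse (by simp [hvl, hvl'])
    (fun h => hne (by rw [← List.reverse_reverse v, h, List.reverse_reverse]))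
  have f1 : v = s₂.reverse ++ c :: z.reverse := by
    have := congrArg List.reverse e1
    simpa using this
  have f2 : v' = r₂.reverse ++ (!c) :: z.reverse := by
    have := congrArg List.reverse e2
    simpa using this
  -- suffixes
  have g1 : ∀ x : Bool, Qf w (c :: (z.reverse ++ [x])) := by
    intro x
    have hx : v ++ [x] ∈ USet w (n+1) := by cases x; exact h1; exact h2
    have hQ := (mem_USet.mp hx).2
    apply Qf_infix ?_ hQ
    refine ⟨s₂.reverse, [], ?_⟩
    rw [f1]
    simp
  have g2 : ∀ x : Bool, Qf w ((!c) :: (z.reverse ++ [x])) := by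
    intro x
    have hx : v' ++ [x] ∈ USet w (n+1) := by cases x; exact h1'; exact h2'
    have hQ := (mem_USet.mp hx).2
    apply Qf_infix ?_ hQ
    refine ⟨r₂.reverse, [], ?_⟩
    rw [f2]
    simp
  have hbal := Qf_bal hw
  cases c
  · have := hbal _ _ (g2 true) (g1 false) (by simp)
    simp only [cnt_cons', cnt_app1, toNat_true, toNat_false, Bool.not_false] at this
    omega
  · have := hbal _ _ (g1 true) (g2 false) (by simp)
    simp only [cnt_cons', cnt_app1, toNat_true, toNat_false, Bool.not_true] at this
    omega

lemma USet_card {w : ℕ → Bool} (hw : Sturmian w) : ∀ n, (USet w n).card ≤ n + 1 := by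
  intro n
  induction n with
  | zero =>
    have : USet w 0 ⊆ {[]} := by
      intro u hu
      have := (mem_USet.mp hu).1
      simp only [Finset.mem_singleton]
      exact List.eq_nil_of_length_eq_zero this
    simpa using Finset.card_le_card this
  | succ n ihn =>
    have key : (USet w (n+1)).card
        = ∑ v ∈ USet w n, ((USet w (n+1)).filter (fun u => u.take n = v)).card := by
      apply Finset.card_eq_sum_card_fiberwise
      intro u hu
      obtain ⟨hlen, hQ⟩ := mem_USet.mp hu
      exact mem_USet.mpr ⟨by simp [hlen], Qf_infix (List.take_prefix _ _).isInfix hQ⟩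
    -- the right-special elements
    set S := (USet w n).filter
      (fun v => v ++ [false] ∈ USet w (n+1) ∧ v ++ [true] ∈ USet w (n+1)) with hS
    have hfib : ∀ v ∈ USet w n,
        ((USet w (n+1)).filter (fun u => u.take n = v)).card ≤ 1 + (if v ∈ S then 1 else 0) := by
      intro v hv
      have hvl := (mem_USet.mp hv).1
      have hsub : ((USet w (n+1)).filter (fun u => u.take n = v)) ⊆ {v ++ [false], v ++ [true]} := by
        intro u hu
        rw [Finset.mem_filter] at hu
        obtain ⟨hu1, hu2⟩ := hu
        have hul := (mem_USet.mp hu1).1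
        have := eq_take_append hul
        rw [hu2] at this
        rw [this]
        cases hb : u[n]'(by omega)
        · simp
        · simp
      by_cases hvS : v ∈ S
      · rw [if_pos hvS]
        calc ((USet w (n+1)).filter (fun u => u.take n = v)).card
            ≤ ({v ++ [false], v ++ [true]} : Finset (List Bool)).card := Finset.card_le_card hsub
          _ ≤ 2 := Finset.card_insert_le _ _ |>.trans (by simp)
      · rw [if_neg hvS]
        -- at most one element
        by_contra hc
        push_neg at hc
        have h2 : 2 ≤ ((USet w (n+1)).filter (fun u => u.take n = v)).card := by omega
        obtain ⟨x, hx, y, hy, hxy⟩ := Finset.one_lt_card.mp h2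
        have hx' := hsub hx
        have hy' := hsub hy
        simp only [Finset.mem_insert, Finset.mem_singleton] at hx' hy'
        apply hvS
        rw [hS, Finset.mem_filter]
        refine ⟨hv, ?_, ?_⟩
        · rcases hx' with rfl | rfl
          · exact (Finset.mem_filter.mp hx).1
          · rcases hy' with rfl | rfl
            · exact (Finset.mem_filter.mp hy).1
            · exact absurd rfl hxy
        · rcases hx' with rfl | rfl
          · rcases hy' with rfl | rfl
            · exact absurd rfl hxy
            · exact (Finset.mem_filter.mp hy).1
          · exact (Finset.mem_filter.mp hx).1
    have hScard : S.card ≤ 1 := by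
      rw [Finset.card_le_one]
      intro a ha b hb
      rw [hS, Finset.mem_filter] at ha hb
      exact USet_RS_unique hw ha.1 hb.1 ha.2.1 ha.2.2 hb.2.1 hb.2.2
    calc (USet w (n+1)).card
        = ∑ v ∈ USet w n, ((USet w (n+1)).filter (fun u => u.take n = v)).card := key
      _ ≤ ∑ v ∈ USet w n, (1 + (if v ∈ S then 1 else 0)) := Finset.sum_le_sum hfib
      _ = (USet w n).card + ∑ v ∈ USet w n, (if v ∈ S then 1 else 0) := by
          rw [Finset.sum_add_distrib, Finset.sum_const, smul_eq_mul, mul_one]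
      _ ≤ (USet w n).card + S.card := by
          have : ∑ v ∈ USet w n, (if v ∈ S then 1 else 0) = ((USet w n).filter (· ∈ S)).card := by
            rw [Finset.card_filter]
          rw [this]
          have : (USet w n).filter (· ∈ S) ⊆ S := by
            intro x hx
            exact (Finset.mem_filter.mp hx).2
          have := Finset.card_le_card this
          omega
      _ ≤ (n + 1) + 1 := by omega

/-- the language of a Sturmian word is closed under reversal -/
lemma rev_closed {w : ℕ → Bool} (hw : Sturmian w) {u : List Bool} (hu : FactorInf u w) :
    FactorInf u.reverse w := by
  set n := u.length with hn
  have hsub : Fset w n ⊆ USet w n := by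
    intro x hx
    rw [USet, Finset.mem_union]
    exact Or.inl hx
  have heq : Fset w n = USet w n := by
    apply Finset.eq_of_subset_of_card_le hsub
    rw [Fset_card hw]
    exact USet_card hw n
  have hmem : u.reverse ∈ USet w n :=
    mem_USet.mpr ⟨by simp [hn], Or.inr (by rwa [List.reverse_reverse])⟩
  rw [← heq, mem_Fset] at hmem
  exact hmem.2

/-- if both 0u1 and 1u0 are factors of a Sturmian word, u is a palindrome -/
lemma factor_pal {w : ℕ → Bool} (hw : Sturmian w) {u : List Bool}
    (h1 : FactorInf (false :: (u ++ [true])) w)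
    (h2 : FactorInf (true :: (u ++ [false])) w) : u.reverse = u := by
  by_contra hne
  obtain ⟨z, c, s₂, r₂, e1, e2, e3⟩ := first_diff u u.reverse (by simp) (fun h => hne h.symm)
  have h1r : FactorInf (true :: (u.reverse ++ [false])) w := by
    have := rev_closed hw h1
    rwa [rev_sandwich] at this
  have h2r : FactorInf (false :: (u.reverse ++ [true])) w := by
    have := rev_closed hw h2
    rwa [rev_sandwich] at this
  cases c
  · -- c = false : use prefixes 0 z 0 of 0u1 and 1 z 1 of 1 u.reverse 0
    have hX : FactorInf (false :: (z ++ [false])) w := by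
      apply factorInf_of_infix ?_ h1
      refine ⟨[], s₂ ++ [true], ?_⟩
      rw [e1]
      simp
    have hY : FactorInf (true :: (z ++ [true])) w := by
      apply factorInf_of_infix ?_ h1r
      refine ⟨[], r₂ ++ [false], ?_⟩
      rw [e2]
      simp
    have := lang_bal hw _ _ hY hX (by simp)
    simp only [cnt_cons', cnt_app1, toNat_true, toNat_false] at this
    omega
  · -- c = true : use prefixes 1 z 1 of 1u0 and 0 z 0 of 0 u.reverse 1
    have hX : FactorInf (true :: (z ++ [true])) w := by
      apply factorInf_of_infix ?_ h2
      refine ⟨[], s₂ ++ [false], ?_⟩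
      rw [e1]
      simp
    have hY : FactorInf (false :: (z ++ [false])) w := by
      apply factorInf_of_infix ?_ h2r
      refine ⟨[], r₂ ++ [true], ?_⟩
      rw [e2]
      simp
    have := lang_bal hw _ _ hX hY (by simp)
    simp only [cnt_cons', cnt_app1, toNat_true, toNat_false] at this
    omega

lemma pref_length (w : ℕ → Bool) (n : ℕ) : (pref w n).length = n := by simp [pref]

lemma pref_succ (w : ℕ → Bool) (n : ℕ) : pref w (n+1) = pref w n ++ [w n] := by
  simp [pref, List.range_succ]

lemma pref_add_win (w : ℕ → Bool) (A L : ℕ) : pref w (A + L) = pref w A ++ win w A L := by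
  rw [pref_eq_win, pref_eq_win]
  simpa using win_add w 0 A L

lemma win_one (w : ℕ → Bool) (i : ℕ) : win w i 1 = [w i] := by
  simp [win, List.range_succ]

lemma block_eq {v : ℕ → Bool} {y : ℕ → List Bool} (hf : Factorizes v y) (k : ℕ) :
    y k = win v (partConcat y k).length (y k).length ∧
    (partConcat y (k+1)).length = (partConcat y k).length + (y k).length := by
  have hpc : partConcat y (k+1) = partConcat y k ++ y k := by
    simp [partConcat, List.range_succ]
  have h1 := hf.2 k
  have h2 := hf.2 (k+1)
  unfold PrefixOf at h1 h2
  have hlen2 : (partConcat y (k+1)).length = (partConcat y k).length + (y k).length := by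
    rw [hpc]; simp
  refine ⟨?_, hlen2⟩
  rw [hpc] at h2
  rw [show (partConcat y k ++ y k).length = (partConcat y k).length + (y k).length by simp,
      pref_add_win, ← h1] at h2
  exact List.append_cancel_left h2

lemma balancedWord_of_factor {w : ℕ → Bool} (hw : Sturmian w) {v : List Bool}
    (hv : FactorInf v w) : BalancedWord v := by
  intro a b ha hb hlen
  exact lang_bal hw a b (factorInf_of_infix ha hv) (factorInf_of_infix hb hv) hlen

lemma cnt_pref_succ (w : ℕ → Bool) (n : ℕ) :
    (pref w (n+1)).count true = (pref w n).count true + (w n).toNat := by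
  rw [pref_succ, cnt_app1]

/-- worker: analysis of one block between consecutive abelian-equivalence points -/
lemma block_worker {v v' : ℕ → Bool} (hv : Sturmian v) (hl : Lang v = Lang v')
    {A L : ℕ} (hL2 : 2 ≤ L)
    (hdne : ∀ n, A < n → n < A + L → (pref v n).count true ≠ (pref v' n).count true)
    (hdA : (pref v A).count true = (pref v' A).count true)
    (hdB : (pref v (A + L)).count true = (pref v' (A + L)).count true)
    (hfa : v A = true) (hfa' : v' A = false) :
    ∃ u, Central u ∧ win v A L = true :: (u ++ [false]) ∧ win v' A L = false :: (u ++ [true]) := by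
  have hbound : ∀ n : ℕ, ((pref v n).count true : ℤ) - (pref v' n).count true ≤ 1 ∧
      ((pref v' n).count true : ℤ) - (pref v n).count true ≤ 1 := by
    intro n
    have hfw : FactorInf (pref v n) v := pref_factorInf v n
    have hfw' : FactorInf (pref v' n) v := by
      have h : pref v' n ∈ Lang v' := pref_factorInf v' n
      rw [← hl] at h
      exact h
    have h1 := lang_bal hv _ _ hfw hfw' (by rw [pref_length, pref_length])
    have h2 := lang_bal hv _ _ hfw' hfw (by rw [pref_length, pref_length])
    constructor <;> push_cast <;> omega
  -- the difference stays equal to 1 strictly inside the block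
  have hmid : ∀ s, 1 ≤ s → s ≤ L - 1 →
      ((pref v (A+s)).count true : ℤ) - (pref v' (A+s)).count true = 1 := by
    intro s hs1 hs2
    induction s with
    | zero => omega
    | succ s ih =>
      rcases Nat.eq_zero_or_pos s with h0 | h0
      · subst h0
        have e1 := cnt_pref_succ v A
        have e2 := cnt_pref_succ v' A
        rw [hfa] at e1
        rw [hfa'] at e2
        rw [toNat_true] at e1
        rw [toNat_false] at e2
        push_cast [e1, e2]
        omega
      · have ihe := ih h0 (by omega)
        have e1 := cnt_pref_succ v (A+s)
        have e2 := cnt_pref_succ v' (A+s)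
        have hb := hbound (A+s+1)
        have hne := hdne (A+s+1) (by omega) (by omega)
        have ht1 : (v (A+s)).toNat ≤ 1 := by cases v (A+s) <;> simp [toNat_true, toNat_false]
        have ht2 : (v' (A+s)).toNat ≤ 1 := by cases v' (A+s) <;> simp [toNat_true, toNat_false]
        have higoal : ((pref v (A+s+1)).count true : ℤ) - (pref v' (A+s+1)).count true = 1 := by
          rw [e1, e2]
          push_cast
          have hnez : ((pref v (A+s+1)).count true : ℤ) - (pref v' (A+s+1)).count true ≠ 0 := by
            intro hc
            apply hne
            have : ((pref v (A+s+1)).count true : ℤ) = (pref v' (A+s+1)).count true := by omega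
            exact_mod_cast this
          rw [e1, e2] at hnez hb
          push_cast at hnez hb
          omega
        rw [show A + (s+1) = A + s + 1 by omega]
        exact higoal
  -- interior letters agree
  have hint : ∀ s, 1 ≤ s → s ≤ L - 2 → v (A + s) = v' (A + s) := by
    intro s h1 h2
    have e1 := hmid s h1 (by omega)
    have e2 := hmid (s+1) (by omega) (by omega)
    have e3 := cnt_pref_succ v (A+s)
    have e4 := cnt_pref_succ v' (A+s)
    rw [show A + (s+1) = A + s + 1 by omega, e3, e4] at e2
    push_cast at e2
    have : (v (A+s)).toNat = (v' (A+s)).toNat := by omega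
    cases hx : v (A+s) <;> cases hy : v' (A+s) <;> rw [hx, hy] at this <;>
      simp [toNat_true, toNat_false] at this <;> rfl
  -- last letters
  have hlast : v (A + (L-1)) = false ∧ v' (A + (L-1)) = true := by
    have e1 := hmid (L-1) (by omega) le_rfl
    have e3 := cnt_pref_succ v (A+(L-1))
    have e4 := cnt_pref_succ v' (A+(L-1))
    rw [show A + (L-1) + 1 = A + L by omega] at e3 e4
    have e5 : ((pref v (A+L)).count true : ℤ) = (pref v' (A+L)).count true := by
      exact_mod_cast hdB
    rw [e3, e4] at e5
    push_cast at e5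
    have ht1 : (v (A+(L-1))).toNat ≤ 1 := by cases v (A+(L-1)) <;> simp [toNat_true, toNat_false]
    have ht2 : (v' (A+(L-1))).toNat ≤ 1 := by cases v' (A+(L-1)) <;> simp [toNat_true, toNat_false]
    have : (v (A+(L-1))).toNat = 0 ∧ (v' (A+(L-1))).toNat = 1 := by omega
    constructor
    · cases hx : v (A+(L-1))
      · rfl
      · rw [hx] at this; simp [toNat_true] at this
    · cases hx : v' (A+(L-1))
      · rw [hx] at this; simp [toNat_false] at this
      · rfl
  -- the middle word
  set u := win v (A+1) (L-2) with hu
  have huu' : win v' (A+1) (L-2) = u := by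
    rw [hu]
    unfold win
    apply List.map_congr_left
    intro j hj
    rw [List.mem_range] at hj
    have := hint (1+j) (by omega) (by omega)
    rw [show A + 1 + j = A + (1 + j) by omega]
    rw [this]
  have hxkE : win v A L = true :: (u ++ [false]) := by
    rw [show L = (L-1)+1 by omega, win_cons, show L - 1 = (L-2)+1 by omega, win_succ]
    rw [show A + 1 + (L-2) = A + (L-1) by omega, hfa, hlast.1, hu]
  have hx'kE : win v' A L = false :: (u ++ [true]) := by
    rw [show L = (L-1)+1 by omega, win_cons, show L - 1 = (L-2)+1 by omega, win_succ]
    rw [show A + 1 + (L-2) = A + (L-1) by omega, hfa', hlast.2, huu']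
  -- memberships
  have hf1 : FactorInf (true :: (u ++ [false])) v := by
    rw [← hxkE]
    exact win_factorInf v A L
  have hf2 : FactorInf (false :: (u ++ [true])) v := by
    rw [← hx'kE]
    have h : win v' A L ∈ Lang v' := win_factorInf v' A L
    rw [← hl] at h
    exact h
  have hupal : u.reverse = u := factor_pal hv hf2 hf1
  exact ⟨u, ⟨hupal, balancedWord_of_factor hv hf2, balancedWord_of_factor hv hf1⟩, hxkE, hx'kE⟩

/-- In the Abelian comparison of two Sturmian words with the same language, each pair of
corresponding terms is either a common single letter or `{0u1, 1u0}` for a central word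
`u`; in particular each term is a Christoffel word and the corresponding term of the
other factorization is its reversal. -/
theorem abelian_comparison_terms (w w' : ℕ → Bool) (x x' : ℕ → List Bool)
    (hw : Sturmian w) (hw' : Sturmian w') (hl : Lang w = Lang w')
    (hab : AbelianComparable w w')
    (hfx : Factorizes w x) (hfx' : Factorizes w' x')
    (hlen : ∀ k, (partConcat x k).length = (partConcat x' k).length)
    (henum : ∀ n, 0 < n →
      (AbelianEq (pref w n) (pref w' n) ↔ ∃ k, n = (partConcat x k).length)) :
    ∀ k, x' k = (x k).reverse ∧
      ((x k = x' k ∧ ∃ a : Bool, x k = [a]) ∨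
        ∃ u, Central u ∧
          ((x k = false :: (u ++ [true]) ∧ x' k = true :: (u ++ [false])) ∨
           (x k = true :: (u ++ [false]) ∧ x' k = false :: (u ++ [true])))) := by
  intro k
  obtain ⟨hxk, hBk⟩ := block_eq hfx k
  obtain ⟨hxk', hBk'⟩ := block_eq hfx' k
  set A := (partConcat x k).length with hA
  set L := (x k).length with hL
  have hA' : (partConcat x' k).length = A := (hlen k).symm
  have hLL : (x' k).length = L := by
    have h1 := hlen (k+1)
    rw [hBk, hBk', hA'] at h1
    omega
  rw [hA', hLL] at hxk'
  rw [hA', hLL] at hBk'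
  have hL1 : 1 ≤ L := by
    rw [hL]
    have := hfx.1 k
    cases hx : x k
    · exact absurd hx this
    · simp [hx]
  -- strict monotonicity of the break points
  have hstepm : ∀ j, (partConcat x j).length < (partConcat x (j+1)).length := by
    intro j
    have h2 := (block_eq hfx j).2
    have h1 : 1 ≤ (x j).length := by
      have := hfx.1 j
      cases hx : x j
      · exact absurd hx this
      · simp [hx]
    omega
  have hmono : ∀ a b, a < b → (partConcat x a).length < (partConcat x b).length := by
    intro a b hab2
    induction b with
    | zero => omega
    | succ b ih =>
      rcases Nat.lt_or_ge a b with h | h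
      · exact lt_trans (ih h) (hstepm b)
      · have : a = b := by omega
        subst this
        exact hstepm a
  -- abelian equivalence points
  have hAE : ∀ n, 0 < n →
      ((pref w n).count true = (pref w' n).count true ↔ ∃ j, n = (partConcat x j).length) := by
    intro n hn
    rw [← henum n hn]
    constructor
    · intro h
      exact ⟨by rw [pref_length, pref_length], h⟩
    · exact fun h => h.2
  have heqm : ∀ j, (pref w ((partConcat x j).length)).count true
      = (pref w' ((partConcat x j).length)).count true := by
    intro j
    rcases Nat.eq_zero_or_pos ((partConcat x j).length) with h0 | hpos
    · rw [h0]
      rfl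
    · exact (hAE _ hpos).mpr ⟨j, rfl⟩
  have hdA : (pref w A).count true = (pref w' A).count true := heqm k
  have hdB : (pref w (A+L)).count true = (pref w' (A+L)).count true := by
    have := heqm (k+1)
    rwa [hBk] at this
  have hdne : ∀ n, A < n → n < A + L → (pref w n).count true ≠ (pref w' n).count true := by
    intro n h1 h2 hc
    obtain ⟨j, hj⟩ := (hAE n (by omega)).mp hc
    rcases Nat.lt_or_ge j k with hjk | hjk
    · have := hmono j k hjk
      omega
    · rcases Nat.eq_or_lt_of_le hjk with h | h
      · subst h
        omega
      · rcases Nat.eq_or_lt_of_le (show k + 1 ≤ j by omega) with h' | h'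
        · rw [← h', hBk] at hj
          omega
        · have := hmono (k+1) j h'
          rw [hBk] at this
          omega
  -- case on block length
  rcases Nat.eq_or_lt_of_le hL1 with hL1' | hL2
  · -- single letter block
    have hL' : L = 1 := hL1'.symm
    have hab1 : w A = w' A := by
      have e1 := cnt_pref_succ w A
      have e2 := cnt_pref_succ w' A
      have hdB1 : (pref w (A+1)).count true = (pref w' (A+1)).count true := by
        rw [← hL']
        exact hdB
      rw [e1, e2, hdA] at hdB1
      have : (w A).toNat = (w' A).toNat := by omega
      cases hx : w A <;> cases hy : w' A <;> rw [hx, hy] at this <;>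
        simp [toNat_true, toNat_false] at this <;> rfl
    have hxk1 : x k = [w A] := by
      rw [hxk, hL', win_one]
    have hxk1' : x' k = [w' A] := by
      rw [hxk', hL', win_one]
    constructor
    · rw [hxk1, hxk1', hab1]
      rfl
    · exact Or.inl ⟨by rw [hxk1, hxk1', hab1], ⟨w A, hxk1⟩⟩
  · -- long block
    have hL2' : 2 ≤ L := hL2
    -- first letters differ
    have hfne : w A ≠ w' A := by
      intro hc
      apply hdne (A+1) (by omega) (by omega)
      have e1 := cnt_pref_succ w A
      have e2 := cnt_pref_succ w' A
      rw [e1, e2, hdA, hc]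
    cases hwa : w A
    · -- w A = false, w' A = true : apply worker with the roles swapped
      have hwa' : w' A = true := by
        cases hx : w' A
        · rw [hwa, hx] at hfne
          exact absurd rfl hfne
        · rfl
      obtain ⟨u, hcen, h1, h2⟩ := block_worker hw' hl.symm hL2'
        (fun n hn1 hn2 hc => hdne n hn1 hn2 hc.symm) hdA.symm hdB.symm hwa' hwa
      refine ⟨?_, Or.inr ⟨u, hcen, Or.inl ⟨?_, ?_⟩⟩⟩
      · rw [hxk, hxk', h1, h2, rev_sandwich, hcen.1]
      · rw [hxk, h2]
      · rw [hxk', h1]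
    · -- w A = true, w' A = false
      have hwa' : w' A = false := by
        cases hx : w' A
        · rfl
        · rw [hwa, hx] at hfne
          exact absurd rfl hfne
      obtain ⟨u, hcen, h1, h2⟩ := block_worker hw hl hL2' hdne hdA hdB hwa hwa'
      refine ⟨?_, Or.inr ⟨u, hcen, Or.inr ⟨?_, ?_⟩⟩⟩
      · rw [hxk, hxk', h1, h2, rev_sandwich, hcen.1]
      · rw [hxk, h1]
      · rw [hxk', h2]
end
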